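/- A matroid on the ground set E_m is BUMAC if and only if it is binary; that is, a function r : 2^{E_m} → ℤ is expressible as r(J) = I(X[J]; Y, X[J^c]) for all J ⊆ E_m, for some m-user BMAC with output Y and mutually independent uniform binary inputs X[1],…,X[m], if and only if there exists a matrix A over F_2 with columns indexed by E_m such that r(J) equals the rank over F_2 of the submatrix of columns indexed by J, for all J ⊆ E_m. -/

import Mathlib

/-!
Polar codes for the m-user MAC (Abbe–Telatar), Statement 10:
A matroid on `E_m` is BUMAC iff it is binary: `r : 2^{E_m} → ℤ` is expressible as
`r(J) = I(X[J]; Y, X[Jᶜ])` for some m-user BMAC with i.i.d. uniform binary inputs iff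
there is a matrix `A` over F₂ whose column ranks represent `r`.
-/

/-- Binary (base 2) Shannon entropy of a finitely supported distribution. -/
noncomputable def H2 {Ω : Type*} [Fintype Ω] (p : Ω → ℝ) : ℝ :=
  -∑ ω, p ω * Real.logb 2 (p ω)

open scoped Classical in
/-- Marginal distribution of the push-forward of `p` under `f`. -/
noncomputable def marg {Ω A : Type*} [Fintype Ω] (p : Ω → ℝ) (f : Ω → A) (a : A) : ℝ :=
  ∑ ω, if f ω = a then p ω else 0

/-- Mutual information (in bits) between `f` and `g` under the joint distribution `p`. -/
noncomputable def mi {Ω A B : Type*} [Fintype Ω] [Fintype A] [Fintype B]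
    (p : Ω → ℝ) (f : Ω → A) (g : Ω → B) : ℝ :=
  H2 (marg p f) + H2 (marg p g) - H2 (marg p fun ω => (f ω, g ω))

/-- `W` is a bona fide transition probability kernel (channel), `W x y = P(y | x)`. -/
def IsChannel {α Y : Type*} [Fintype Y] (W : α → Y → ℝ) : Prop :=
  (∀ x y, 0 ≤ W x y) ∧ ∀ x, ∑ y, W x y = 1

/-- Joint distribution of (input, output) of an `m`-user BMAC with i.i.d. uniform binary
inputs. -/
noncomputable def inputJoint {m : ℕ} {Y : Type*} (W : (Fin m → ZMod 2) → Y → ℝ) :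
    (Fin m → ZMod 2) × Y → ℝ :=
  fun q => W q.1 q.2 / 2 ^ m

/-- `I[J](P) = I(X[J]; Y, X[Jᶜ])` for the BMAC `W` with i.i.d. uniform binary inputs. -/
noncomputable def condMI {m : ℕ} {Y : Type*} [Fintype Y] (W : (Fin m → ZMod 2) → Y → ℝ)
    (J : Finset (Fin m)) : ℝ :=
  mi (inputJoint W) (fun q => fun i : {i // i ∈ J} => q.1 i.1)
    (fun q => (q.2, fun i : {i // i ∈ Jᶜ} => q.1 i.1))

/-- A bundled m-user binary-input MAC with a finite output alphabet. -/
structure BMAC (m : ℕ) where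
  Out : Type
  [fin : Fintype Out]
  W : (Fin m → ZMod 2) → Out → ℝ
  nonneg : ∀ x y, 0 ≤ W x y
  sum_one : ∀ x, ∑ y, W x y = 1

attribute [instance] BMAC.fin

/-- The F₂-rank of the submatrix of `A` consisting of the columns indexed by `J`. -/
noncomputable def colRank {k m : ℕ} (A : Matrix (Fin k) (Fin m) (ZMod 2))
    (J : Finset (Fin m)) : ℕ :=
  (A.submatrix id (fun j : {j // j ∈ J} => (j : Fin m))).rank

set_option linter.unusedSectionVars false
set_option linter.unusedVariables false
set_option linter.unnecessarySimpa false
set_option maxHeartbeats 1000000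

section Part1
open Real Module Finset

open scoped Classical

namespace S10

variable {Ω A B : Type*} [Fintype Ω] [Fintype A] [Fintype B]

/-- conditional distribution of `p` given `f = a`. -/
noncomputable def condDist (p : Ω → ℝ) (f : Ω → A) (a : A) : Ω → ℝ :=
  fun ω => (if f ω = a then p ω else 0) / marg p f a

lemma marg_nonneg {p : Ω → ℝ} (hp : ∀ ω, 0 ≤ p ω) (f : Ω → A) (a : A) : 0 ≤ marg p f a := by
  refine Finset.sum_nonneg fun ω _ => ?_
  by_cases h : f ω = a
  · rw [if_pos h]; exact hp ω
  · rw [if_neg h]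

lemma sum_marg (p : Ω → ℝ) (f : Ω → A) : ∑ a, marg p f a = ∑ ω, p ω := by
  unfold marg
  rw [Finset.sum_comm]
  refine Finset.sum_congr rfl fun ω _ => ?_
  simp

lemma marg_eq_sum_filter (p : Ω → ℝ) (f : Ω → A) (a : A) :
    marg p f a = ∑ ω ∈ univ.filter (fun ω => f ω = a), p ω := by
  unfold marg; rw [Finset.sum_filter]

lemma fiber_zero_of_marg_zero {p : Ω → ℝ} (hp : ∀ ω, 0 ≤ p ω) {f : Ω → A} {a : A}
    (h : marg p f a = 0) : ∀ ω, f ω = a → p ω = 0 := by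
  intro ω hω
  rw [marg_eq_sum_filter] at h
  have := (Finset.sum_eq_zero_iff_of_nonneg (fun ω _ => hp ω)).1 h ω (by simp [hω])
  exact this

lemma marg_apply_inj {p : Ω → ℝ} {e : Ω → A} (he : Function.Injective e) (ω : Ω) :
    marg p e (e ω) = p ω := by
  unfold marg
  rw [Finset.sum_eq_single ω]
  · rw [if_pos rfl]
  · intro b _ hb
    rw [if_neg (fun h => hb (he h))]
  · intro h; exact absurd (mem_univ ω) h

lemma marg_of_not_range {p : Ω → ℝ} {e : Ω → A} {a : A} (ha : ∀ ω, e ω ≠ a) :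
    marg p e a = 0 := by
  unfold marg
  exact Finset.sum_eq_zero fun ω _ => if_neg (ha ω)

lemma H2_marg_inj {p : Ω → ℝ} {e : Ω → A} (he : Function.Injective e) :
    H2 (marg p e) = H2 p := by
  unfold H2
  congr 1
  have h1 : ∑ a, marg p e a * logb 2 (marg p e a)
      = ∑ a ∈ univ.image e, marg p e a * logb 2 (marg p e a) := by
    refine (Finset.sum_subset (Finset.subset_univ _) ?_).symm
    intro a _ ha
    have hz : marg p e a = 0 := by
      refine marg_of_not_range fun ω h => ha ?_
      exact h ▸ Finset.mem_image_of_mem e (mem_univ ω)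
    rw [hz]; simp
  rw [h1, Finset.sum_image (fun x _ y _ h => he h)]
  exact Finset.sum_congr rfl fun ω _ => by rw [marg_apply_inj he]

end S10

end Part1

section Part2
open Real Module Finset
open scoped Classical
namespace S10

variable {Ω A B : Type*} [Fintype Ω] [Fintype A] [Fintype B]

lemma condDist_nonneg {p : Ω → ℝ} (hp : ∀ ω, 0 ≤ p ω) (f : Ω → A) (a : A) (ω : Ω) :
    0 ≤ condDist p f a ω := by
  unfold condDist
  by_cases hm : 0 ≤ marg p f a
  · refine div_nonneg ?_ hm
    by_cases h : f ω = a
    · rw [if_pos h]; exact hp ω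
    · rw [if_neg h]
  · exact absurd (marg_nonneg hp f a) hm

lemma sum_condDist {p : Ω → ℝ} {f : Ω → A} {a : A} (h : marg p f a ≠ 0) :
    ∑ ω, condDist p f a ω = 1 := by
  unfold condDist
  rw [← Finset.sum_div]
  rw [show ∑ ω, (if f ω = a then p ω else 0) = marg p f a from rfl]
  exact div_self h

lemma condDist_ne_zero {p : Ω → ℝ} {f : Ω → A} {a : A} {ω : Ω}
    (h : condDist p f a ω ≠ 0) : f ω = a ∧ p ω ≠ 0 := by
  unfold condDist at h
  by_cases hf : f ω = a
  · refine ⟨hf, fun hz => ?_⟩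
    rw [if_pos hf, hz, zero_div] at h
    exact h rfl
  · rw [if_neg hf, zero_div] at h
    exact absurd rfl h

lemma condDist_collapse {p : Ω → ℝ} {f : Ω → A} {a : A}
    (hsupp : ∀ ω, p ω ≠ 0 → f ω = a) (hs : ∑ ω, p ω = 1) :
    condDist p f a = p := by
  have hm : marg p f a = 1 := by
    unfold marg
    rw [← hs]
    refine Finset.sum_congr rfl fun ω _ => ?_
    by_cases h : f ω = a
    · rw [if_pos h]
    · rw [if_neg h]
      by_contra hne
      exact h (hsupp ω (fun hz => hne hz.symm))
  funext ω
  unfold condDist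
  rw [hm, div_one]
  by_cases h : f ω = a
  · rw [if_pos h]
  · rw [if_neg h]
    by_contra hne
    exact h (hsupp ω (fun hz => hne hz.symm))

lemma condDist_mul {p : Ω → ℝ} {f : Ω → A} {ω : Ω} (h : marg p f (f ω) ≠ 0) :
    marg p f (f ω) * condDist p f (f ω) ω = p ω := by
  unfold condDist
  rw [if_pos rfl, mul_div_cancel₀ _ h]

/-- The grouping / chain-rule identity for entropy. -/
lemma H2_master (p : Ω → ℝ) (hp : ∀ ω, 0 ≤ p ω) (f : Ω → A) :
    H2 p = H2 (marg p f) + ∑ a, marg p f a * H2 (condDist p f a) := by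
  have fiber_sum : ∀ a : A, ∑ ω ∈ univ.filter (fun ω => f ω = a), p ω * logb 2 (p ω)
      = marg p f a * logb 2 (marg p f a) - marg p f a * H2 (condDist p f a) := by
    intro a
    by_cases hm : marg p f a = 0
    · have hz : ∀ ω ∈ univ.filter (fun ω => f ω = a), p ω * logb 2 (p ω) = 0 := by
        intro ω hω
        rw [fiber_zero_of_marg_zero hp hm ω (by simpa using hω)]
        simp
      rw [Finset.sum_eq_zero hz, hm]
      ring
    · have hmpos : 0 < marg p f a := lt_of_le_of_ne (marg_nonneg hp f a) (Ne.symm hm)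
      have key : ∀ ω ∈ univ.filter (fun ω => f ω = a), p ω * logb 2 (p ω)
          = marg p f a * (condDist p f a ω * logb 2 (condDist p f a ω))
            + marg p f a * condDist p f a ω * logb 2 (marg p f a) := by
        intro ω hω
        have hfa : f ω = a := by simpa using hω
        have hcd : condDist p f a ω = p ω / marg p f a := by
          unfold condDist; rw [if_pos hfa]
        by_cases hz : p ω = 0
        · rw [hz, hcd, hz, zero_div]; simp
        · have hppos : 0 < p ω := lt_of_le_of_ne (hp ω) (Ne.symm hz)
          rw [hcd]
          rw [Real.logb, Real.logb, Real.logb]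
          rw [Real.log_div hz hm]
          field_simp
          ring
      rw [Finset.sum_congr rfl key, Finset.sum_add_distrib, ← Finset.mul_sum,
          ← Finset.sum_mul, ← Finset.mul_sum]
      have hsum1 : ∑ ω ∈ univ.filter (fun ω => f ω = a), condDist p f a ω = 1 := by
        have : ∑ ω ∈ univ.filter (fun ω => f ω = a), condDist p f a ω
            = ∑ ω, condDist p f a ω := by
          refine Finset.sum_subset (Finset.filter_subset _ _) ?_
          intro ω _ hω
          have hfω : f ω ≠ a := by simpa using hω
          unfold condDist
          rw [if_neg hfω, zero_div]
        rw [this, sum_condDist hm]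
      have hH2 : ∑ ω ∈ univ.filter (fun ω => f ω = a),
          condDist p f a ω * logb 2 (condDist p f a ω) = -H2 (condDist p f a) := by
        unfold H2
        rw [neg_neg]
        refine Finset.sum_subset (Finset.filter_subset _ _) ?_
        intro ω _ hω
        have hfω : f ω ≠ a := by simpa using hω
        unfold condDist
        rw [if_neg hfω, zero_div]
        simp
      ring_nf
      rw [hH2, hsum1]
      ring
  have split : ∑ ω, p ω * logb 2 (p ω)
      = ∑ a, ∑ ω ∈ univ.filter (fun ω => f ω = a), p ω * logb 2 (p ω) := by
    rw [Finset.sum_fiberwise univ f (fun ω => p ω * logb 2 (p ω))]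
  have hM : H2 (marg p f) = -∑ a, marg p f a * logb 2 (marg p f a) := rfl
  rw [show H2 p = -∑ ω, p ω * logb 2 (p ω) from rfl, split,
    Finset.sum_congr rfl (fun a _ => fiber_sum a), Finset.sum_sub_distrib, hM]
  ring

end S10
end Part2

section Part3
open Real Module Finset
open scoped Classical
namespace S10

variable {Ω A B : Type*} [Fintype Ω] [Fintype A] [Fintype B]

lemma avg_ge {pr v : A → ℝ} {lo : ℝ} (hpr : ∀ a, 0 ≤ pr a) (hs : ∑ a, pr a = 1)
    (hv : ∀ a, pr a ≠ 0 → lo ≤ v a) : lo ≤ ∑ a, pr a * v a := by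
  have : ∀ a ∈ univ, pr a * lo ≤ pr a * v a := by
    intro a _
    by_cases h : pr a = 0
    · rw [h]; simp
    · exact mul_le_mul_of_nonneg_left (hv a h) (hpr a)
  calc lo = ∑ a, pr a * lo := by rw [← Finset.sum_mul, hs, one_mul]
    _ ≤ ∑ a, pr a * v a := Finset.sum_le_sum this

lemma avg_le {pr v : A → ℝ} {hi : ℝ} (hpr : ∀ a, 0 ≤ pr a) (hs : ∑ a, pr a = 1)
    (hv : ∀ a, pr a ≠ 0 → v a ≤ hi) : ∑ a, pr a * v a ≤ hi := by
  have : ∀ a ∈ univ, pr a * v a ≤ pr a * hi := by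
    intro a _
    by_cases h : pr a = 0
    · rw [h]; simp
    · exact mul_le_mul_of_nonneg_left (hv a h) (hpr a)
  calc ∑ a, pr a * v a ≤ ∑ a, pr a * hi := Finset.sum_le_sum this
    _ = hi := by rw [← Finset.sum_mul, hs, one_mul]

lemma forcing_lo {pr v : A → ℝ} {lo : ℝ} (hpr : ∀ a, 0 ≤ pr a) (hs : ∑ a, pr a = 1)
    (hv : ∀ a, pr a ≠ 0 → lo ≤ v a) (havg : ∑ a, pr a * v a = lo) :
    ∀ a, pr a ≠ 0 → v a = lo := by
  intro a ha
  by_contra hne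
  have hlt : lo < v a := lt_of_le_of_ne (hv a ha) (Ne.symm hne)
  have hpra : 0 < pr a := lt_of_le_of_ne (hpr a) (Ne.symm ha)
  have key : ∑ b, pr b * v b > lo := by
    have h1 : ∀ b ∈ univ, pr b * lo ≤ pr b * v b := by
      intro b _
      by_cases h : pr b = 0
      · rw [h]; simp
      · exact mul_le_mul_of_nonneg_left (hv b h) (hpr b)
    have h2 : pr a * lo < pr a * v a := by
      exact (mul_lt_mul_iff_right₀ hpra).2 hlt
    have := Finset.sum_lt_sum h1 ⟨a, mem_univ a, h2⟩
    calc lo = ∑ b, pr b * lo := by rw [← Finset.sum_mul, hs, one_mul]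
      _ < ∑ b, pr b * v b := this
  exact absurd havg (ne_of_gt key)

lemma forcing_hi {pr v : A → ℝ} {hi : ℝ} (hpr : ∀ a, 0 ≤ pr a) (hs : ∑ a, pr a = 1)
    (hv : ∀ a, pr a ≠ 0 → v a ≤ hi) (havg : ∑ a, pr a * v a = hi) :
    ∀ a, pr a ≠ 0 → v a = hi := by
  intro a ha
  have h2 : ∑ a, pr a * -v a = -hi := by
    rw [show ∑ a, pr a * -v a = -∑ a, pr a * v a by
      rw [← Finset.sum_neg_distrib]; exact Finset.sum_congr rfl fun b _ => by ring]
    rw [havg]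
  have := forcing_lo (lo := -hi) (v := fun a => -v a) hpr hs
    (fun a h => neg_le_neg (hv a h)) h2 a ha
  have h3 : -v a = -hi := this
  linarith

/-- uniform--on-support entropy -/
lemma H2_two_valued {q : A → ℝ} {c : ℝ} (hc : 0 < c) (h : ∀ a, q a = 0 ∨ q a = c)
    (hs : ∑ a, q a = 1) : H2 q = - logb 2 c := by
  classical
  set s := univ.filter (fun a => q a ≠ 0) with hsdef
  have hqs : ∀ a ∈ s, q a = c := by
    intro a ha
    rcases h a with h0 | h1
    · exact absurd h0 (by simpa [hsdef] using ha)
    · exact h1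
  have hsum : ∑ a ∈ s, q a = 1 := by
    rw [← hs]
    refine Finset.sum_subset (Finset.filter_subset _ _) ?_
    intro a _ ha
    have : ¬ q a ≠ 0 := by simpa [hsdef] using ha
    simpa using this
  have hcard : (s.card : ℝ) * c = 1 := by
    rw [← hsum, Finset.sum_congr rfl hqs, Finset.sum_const, nsmul_eq_mul]
  have hH : H2 q = -(↑s.card * (c * logb 2 c)) := by
    unfold H2
    congr 1
    rw [show ∑ a, q a * logb 2 (q a) = ∑ a ∈ s, q a * logb 2 (q a) by
      refine (Finset.sum_subset (Finset.filter_subset _ _) ?_).symm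
      intro a _ ha
      have : ¬ q a ≠ 0 := by simpa [hsdef] using ha
      have hz : q a = 0 := by simpa using this
      rw [hz]; simp]
    rw [Finset.sum_congr rfl (fun a ha => by rw [hqs a ha]), Finset.sum_const, nsmul_eq_mul]
  rw [hH]
  have hcinv : (s.card : ℝ) = c⁻¹ := by
    field_simp at hcard ⊢
    linarith
  rw [hcinv]
  field_simp

lemma H2_const_uniform (hA : 0 < (Fintype.card A : ℝ)) :
    H2 (fun _ : A => (Fintype.card A : ℝ)⁻¹) = logb 2 (Fintype.card A) := by
  have h := H2_two_valued (q := fun _ : A => (Fintype.card A : ℝ)⁻¹)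
    (c := (Fintype.card A : ℝ)⁻¹) (by positivity)
    (fun a => Or.inr rfl)
    (by rw [Finset.sum_const, nsmul_eq_mul, Finset.card_univ]; field_simp)
  rw [h, Real.logb_inv]
  ring

-- bit entropy lemmas
lemma zmod2_sum (f : ZMod 2 → ℝ) : ∑ b, f b = f 0 + f 1 := by
  have : (Finset.univ : Finset (ZMod 2)) = {0, 1} := by decide
  rw [this, Finset.sum_pair (by decide)]

lemma zmod2_cases (b : ZMod 2) : b = 0 ∨ b = 1 := by fin_cases b; exacts [Or.inl rfl, Or.inr rfl]

lemma H2_bit_eq (l : ZMod 2 → ℝ) (h1 : l 0 + l 1 = 1) :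
    H2 l = binEntropy (l 0) / Real.log 2 := by
  unfold H2 binEntropy
  rw [zmod2_sum]
  have h2 : l 1 = 1 - l 0 := by linarith
  rw [h2, Real.log_inv, Real.log_inv, Real.logb, Real.logb]
  ring

lemma H2_bit_le_one {l : ZMod 2 → ℝ} (h1 : l 0 + l 1 = 1) : H2 l ≤ 1 := by
  rw [H2_bit_eq l h1]
  rw [div_le_one (Real.log_pos (by norm_num))]
  exact Real.binEntropy_le_log_two

lemma H2_bit_nonneg {l : ZMod 2 → ℝ} (hl : ∀ b, 0 ≤ l b) (h1 : l 0 + l 1 = 1) : 0 ≤ H2 l := by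
  rw [H2_bit_eq l h1]
  refine div_nonneg (Real.binEntropy_nonneg (hl 0) ?_) (Real.log_nonneg (by norm_num))
  have := hl 1; linarith

lemma H2_bit_eq_one {l : ZMod 2 → ℝ} (h1 : l 0 + l 1 = 1) (h : H2 l = 1) :
    l 0 = 2⁻¹ ∧ l 1 = 2⁻¹ := by
  rw [H2_bit_eq l h1, div_eq_one_iff_eq (ne_of_gt (Real.log_pos (by norm_num)))] at h
  have h0 := Real.binEntropy_eq_log_two.1 h
  constructor
  · exact h0
  · rw [h0] at h1; linarith

lemma H2_bit_eq_zero {l : ZMod 2 → ℝ} (h1 : l 0 + l 1 = 1) (h : H2 l = 0) :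
    (l 0 = 1 ∧ l 1 = 0) ∨ (l 1 = 1 ∧ l 0 = 0) := by
  rw [H2_bit_eq l h1, div_eq_zero_iff] at h
  have hlog : Real.log 2 ≠ 0 := ne_of_gt (Real.log_pos (by norm_num))
  rcases h with h | h
  · rcases Real.binEntropy_eq_zero.1 h with h0 | h0
    · right; constructor <;> [linarith; exact h0]
    · left; constructor <;> [exact h0; linarith]
  · exact absurd h hlog

end S10
end Part3

section Part4
open Real Module Finset
open scoped Classical
namespace S10

variable {m : ℕ}

/-- Subspace of vectors supported inside `T`. -/
def coordSub (m : ℕ) (T : Finset (Fin m)) : Submodule (ZMod 2) (Fin m → ZMod 2) where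
  carrier := {x | ∀ i, i ∉ T → x i = 0}
  add_mem' := fun hx hy i hi => by simp [hx i hi, hy i hi]
  zero_mem' := fun i _ => rfl
  smul_mem' := fun c x hx i hi => by simp [hx i hi]

lemma mem_coordSub {T : Finset (Fin m)} {x : Fin m → ZMod 2} :
    x ∈ coordSub m T ↔ ∀ i, i ∉ T → x i = 0 := Iff.rfl

lemma coordSub_mono {S T : Finset (Fin m)} (h : S ⊆ T) : coordSub m S ≤ coordSub m T :=
  fun x hx i hi => hx i (fun hiS => hi (h hiS))

/-- `q` is the uniform distribution on a coset of `V`. -/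
def IsUC (q : (Fin m → ZMod 2) → ℝ) (V : Submodule (ZMod 2) (Fin m → ZMod 2)) : Prop :=
  ∃ x0, ∀ x, q x = if x - x0 ∈ V then ((Nat.card V : ℝ))⁻¹ else 0

lemma natCard_pos (V : Submodule (ZMod 2) (Fin m → ZMod 2)) : 0 < Nat.card V :=
  Nat.card_pos

lemma card_submodule (V : Submodule (ZMod 2) (Fin m → ZMod 2)) :
    Nat.card V = 2 ^ finrank (ZMod 2) V := by
  rw [Nat.card_eq_fintype_card, card_eq_pow_finrank (K := ZMod 2), ZMod.card 2]

lemma card_coset_filter (V : Submodule (ZMod 2) (Fin m → ZMod 2)) (x0 : Fin m → ZMod 2) :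
    (univ.filter fun x => x - x0 ∈ V).card = Nat.card V := by
  have e : {x : Fin m → ZMod 2 // x - x0 ∈ V} ≃ V :=
    { toFun := fun x => ⟨x.1 - x0, x.2⟩
      invFun := fun v => ⟨v.1 + x0, by simp [v.2]⟩
      left_inv := fun x => by ext; simp
      right_inv := fun v => by ext; simp }
  rw [← Fintype.card_subtype, ← Nat.card_eq_fintype_card, Nat.card_congr e]

lemma sum_ite_coset (V : Submodule (ZMod 2) (Fin m → ZMod 2)) (x0 : Fin m → ZMod 2) (c : ℝ) :
    ∑ x, (if x - x0 ∈ V then c else 0) = (Nat.card V : ℝ) * c := by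
  rw [← Finset.sum_filter, Finset.sum_const, nsmul_eq_mul, card_coset_filter]

lemma IsUC_sum {q : (Fin m → ZMod 2) → ℝ} {V} (h : IsUC q V) : ∑ x, q x = 1 := by
  obtain ⟨x0, hx0⟩ := h
  rw [Finset.sum_congr rfl (fun x _ => hx0 x), sum_ite_coset]
  rw [mul_inv_cancel₀]
  exact Nat.cast_ne_zero.2 (natCard_pos V).ne'

lemma IsUC_nonneg {q : (Fin m → ZMod 2) → ℝ} {V} (h : IsUC q V) (x : Fin m → ZMod 2) :
    0 ≤ q x := by
  obtain ⟨x0, hx0⟩ := h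
  rw [hx0 x]
  by_cases hm : x - x0 ∈ V
  · rw [if_pos hm]; positivity
  · rw [if_neg hm]

lemma H2_IsUC {q : (Fin m → ZMod 2) → ℝ} {V} (h : IsUC q V) :
    H2 q = (finrank (ZMod 2) V : ℝ) := by
  obtain ⟨x0, hx0⟩ := h
  have hc : (0:ℝ) < (Nat.card V : ℝ)⁻¹ := by
    have := natCard_pos V
    positivity
  have h2 : H2 q = - logb 2 ((Nat.card V : ℝ))⁻¹ := by
    refine H2_two_valued hc (fun x => ?_) ?_
    · rw [hx0 x]
      by_cases hm : x - x0 ∈ V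
      · right; rw [if_pos hm]
      · left; rw [if_neg hm]
    · exact IsUC_sum ⟨x0, hx0⟩
  rw [h2, Real.logb_inv, neg_neg, card_submodule]
  push_cast
  rw [Real.logb_pow]
  simp

lemma IsUC_ne_zero {q : (Fin m → ZMod 2) → ℝ} {V : Submodule (ZMod 2) (Fin m → ZMod 2)}
    {x0 : Fin m → ZMod 2}
    (h : ∀ x, q x = if x - x0 ∈ V then ((Nat.card V : ℝ))⁻¹ else 0) (x : Fin m → ZMod 2) :
    q x ≠ 0 ↔ x - x0 ∈ V := by
  rw [h x]
  by_cases hm : x - x0 ∈ V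
  · rw [if_pos hm]
    simp only [hm, iff_true]
    have := natCard_pos V
    positivity
  · rw [if_neg hm]
    simp [hm]

lemma IsUC_unique {q : (Fin m → ZMod 2) → ℝ} {V W} (hV : IsUC q V) (hW : IsUC q W) :
    V = W := by
  obtain ⟨x0, h0⟩ := hV
  obtain ⟨x1, h1⟩ := hW
  have key : ∀ x, x - x0 ∈ V ↔ x - x1 ∈ W := by
    intro x
    rw [← IsUC_ne_zero h0 x, ← IsUC_ne_zero h1 x]
  have hx01 : x0 - x1 ∈ W := by rw [← key x0]; simp
  have hx10 : x1 - x0 ∈ V := by rw [key x1]; simp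
  ext v
  constructor
  · intro hv
    have : (v + x0) - x0 ∈ V := by simpa using hv
    have h2 : (v + x0) - x1 ∈ W := (key (v + x0)).1 this
    have : ((v + x0) - x1) - (x0 - x1) ∈ W := W.sub_mem h2 hx01
    simpa using this
  · intro hv
    have : (v + x1) - x1 ∈ W := by simpa using hv
    have h2 : (v + x1) - x0 ∈ V := (key (v + x1)).2 this
    have : ((v + x1) - x0) - (x1 - x0) ∈ V := V.sub_mem h2 hx10
    simpa using this

def restr (S : Finset (Fin m)) (x : Fin m → ZMod 2) : {i // i ∈ S} → ZMod 2 := fun i => x i.1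

lemma IsUC_condDist {q : (Fin m → ZMod 2) → ℝ} {V} (hq : IsUC q V) {S : Finset (Fin m)}
    {w : {i // i ∈ S} → ZMod 2} (h : marg q (restr S) w ≠ 0) :
    IsUC (condDist q (restr S) w) (V ⊓ coordSub m Sᶜ) := by
  obtain ⟨x0, h0⟩ := hq
  set c : ℝ := ((Nat.card V : ℝ))⁻¹ with hcdef
  have hcpos : 0 < c := by
    have := natCard_pos V; positivity
  -- find a point in the support
  obtain ⟨x1, hx1⟩ : ∃ x1, restr S x1 = w ∧ q x1 ≠ 0 := by
    obtain ⟨x1, hx1⟩ := Finset.exists_ne_zero_of_sum_ne_zero h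
    refine ⟨x1, ?_⟩
    by_cases hr : restr S x1 = w
    · refine ⟨hr, ?_⟩
      intro hz
      apply hx1.2
      rw [if_pos hr, hz]
    · exact absurd (if_neg hr) hx1.2
  obtain ⟨hx1w, hx1q⟩ := hx1
  have hx1V : x1 - x0 ∈ V := by
    by_contra hc
    exact hx1q (by rw [h0 x1, if_neg hc])
  -- characterize the support
  have key : ∀ x, (restr S x = w ∧ x - x0 ∈ V) ↔ x - x1 ∈ V ⊓ coordSub m Sᶜ := by
    intro x
    constructor
    · rintro ⟨hw, hV⟩
      constructor
      · have : (x - x0) - (x1 - x0) ∈ V := V.sub_mem hV hx1V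
        simpa [sub_sub_sub_cancel_right] using this
      · intro i hi
        have hiS : i ∈ S := by
          by_contra hiS
          exact hi (Finset.mem_compl.2 hiS)
        have e1 : x i = w ⟨i, hiS⟩ := congrFun hw ⟨i, hiS⟩
        have e2 : x1 i = w ⟨i, hiS⟩ := congrFun hx1w ⟨i, hiS⟩
        simp [e1, e2]
    · rintro ⟨hV, hC⟩
      constructor
      · funext i
        have hz : (x - x1) i.1 = 0 := hC i.1 (by simp [Finset.mem_compl, i.2])
        have hxi : x i.1 = x1 i.1 := by
          have h' : x i.1 - x1 i.1 = 0 := hz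
          linear_combination (norm := ring_nf) h'
        show x i.1 = w i
        rw [hxi]
        exact congrFun hx1w i
      · have : (x - x1) + (x1 - x0) ∈ V := V.add_mem hV hx1V
        simpa [sub_add_sub_cancel] using this
  set N : ℝ := (Nat.card (V ⊓ coordSub m Sᶜ : Submodule (ZMod 2) (Fin m → ZMod 2)) : ℝ) with hNdef
  have hN : 0 < N := by
    have := natCard_pos (V ⊓ coordSub m Sᶜ : Submodule (ZMod 2) (Fin m → ZMod 2))
    rw [hNdef]; positivity
  have hmarg0 : marg q (restr S) w = N * c := by
    rw [marg_eq_sum_filter, Finset.sum_congr rfl (fun x _ => h0 x), ← Finset.sum_filter,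
      Finset.filter_filter, Finset.sum_const, nsmul_eq_mul]
    congr 1
    rw [hNdef, ← card_coset_filter (V ⊓ coordSub m Sᶜ) x1]
    norm_cast
    congr 1
    ext x
    simp only [Finset.mem_filter, Finset.mem_univ, true_and]
    exact key x
  refine ⟨x1, fun x => ?_⟩
  unfold condDist
  rw [hmarg0]
  by_cases h1 : restr S x = w
  · rw [if_pos h1, h0 x]
    by_cases h2 : x - x0 ∈ V
    · rw [if_pos h2, if_pos ((key x).1 ⟨h1, h2⟩), ← hNdef]
      rw [hcdef] at hcpos ⊢
      field_simp
    · rw [if_neg h2, if_neg (fun hc => h2 ((key x).2 hc).2)]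
      simp
  · rw [if_neg h1, if_neg (fun hc => h1 ((key x).2 hc).1)]
    simp

end S10
end Part4

section Part5
open Real Module Finset
open scoped Classical
namespace S10

variable {m : ℕ}

lemma zmod2_ne_zero {a : ZMod 2} (h : a ≠ 0) : a = 1 := by
  rcases zmod2_cases a with h0 | h1
  · exact absurd h0 h
  · exact h1

/-- A subspace supported in `U` is determined by the cardinalities of its intersections
with the coordinate subspaces. -/
lemma profile_unique {U : Finset (Fin m)} {V0 V1 : Submodule (ZMod 2) (Fin m → ZMod 2)}
    (h0 : V0 ≤ coordSub m U) (h1 : V1 ≤ coordSub m U)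
    (h : ∀ R ⊆ U, Nat.card (V0 ⊓ coordSub m R : Submodule (ZMod 2) (Fin m → ZMod 2))
      = Nat.card (V1 ⊓ coordSub m R : Submodule (ZMod 2) (Fin m → ZMod 2))) :
    V0 = V1 := by
  have key : ∀ (n : ℕ) (R : Finset (Fin m)), R.card ≤ n → R ⊆ U →
      ∀ v, (v ∈ V0 ⊓ coordSub m R ↔ v ∈ V1 ⊓ coordSub m R) := by
    intro n
    induction n with
    | zero =>
      intro R hcard _ v
      have hR : R = ∅ := Finset.card_eq_zero.1 (Nat.le_zero.1 hcard)
      subst hR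
      have hzero : ∀ (W : Submodule (ZMod 2) (Fin m → ZMod 2)),
          (v ∈ W ⊓ coordSub m ∅ ↔ v = 0) := by
        intro W
        constructor
        · rintro ⟨_, hv⟩
          funext i
          exact hv i (Finset.notMem_empty i)
        · rintro rfl
          exact ⟨W.zero_mem, fun i _ => rfl⟩
      rw [hzero V0, hzero V1]
    | succ n ih =>
      intro R hcard hRU v
      by_cases hle : R.card ≤ n
      · exact ih R hle hRU v
      -- R.card = n + 1
      set χ : Fin m → ZMod 2 := fun i => if i ∈ R then 1 else 0 with hχ
      have haux : ∀ u : Fin m → ZMod 2, u ≠ χ → u ∈ coordSub m R → (u ∈ V0 ↔ u ∈ V1) := by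
        intro u hne hu
        set R' := R.filter (fun i => u i ≠ 0) with hR'
        have hR'R : R' ⊆ R := Finset.filter_subset _ _
        have huR' : u ∈ coordSub m R' := by
          intro i hi
          by_cases hiR : i ∈ R
          · by_contra hz
            exact hi (Finset.mem_filter.2 ⟨hiR, hz⟩)
          · exact hu i hiR
        have hR'ne : R' ≠ R := by
          intro hEq
          apply hne
          funext i
          by_cases hiR : i ∈ R
          · have hiR' : i ∈ R' := hEq ▸ hiR
            have hnz := (Finset.mem_filter.1 hiR').2
            show u i = (if i ∈ R then (1 : ZMod 2) else 0)
            rw [zmod2_ne_zero hnz, if_pos hiR]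
          · show u i = (if i ∈ R then (1 : ZMod 2) else 0)
            rw [if_neg hiR]
            exact hu i hiR
        have hlt : R'.card < R.card := Finset.card_lt_card (ssubset_of_subset_of_ne hR'R hR'ne)
        have hR'n : R'.card ≤ n := by omega
        have := ih R' hR'n (hR'R.trans hRU) u
        constructor
        · intro hV; exact ((this.1 ⟨hV, huR'⟩).1)
        · intro hV; exact ((this.2 ⟨hV, huR'⟩).1)
      -- compare via cardinalities
      set A0 := univ.filter (fun u => u ∈ V0 ⊓ coordSub m R) with hA0
      set A1 := univ.filter (fun u => u ∈ V1 ⊓ coordSub m R) with hA1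
      have hcards : A0.card = A1.card := by
        have hh := h R hRU
        rw [Nat.card_eq_fintype_card, Nat.card_eq_fintype_card,
          Fintype.card_subtype, Fintype.card_subtype] at hh
        exact hh
      have herase : A0.erase χ = A1.erase χ := by
        ext u
        simp only [Finset.mem_erase, hA0, hA1, Finset.mem_filter, Finset.mem_univ, true_and]
        constructor
        · rintro ⟨hne, hV, hR⟩
          exact ⟨hne, (haux u hne hR).1 hV, hR⟩
        · rintro ⟨hne, hV, hR⟩
          exact ⟨hne, (haux u hne hR).2 hV, hR⟩
      have hχmem : χ ∈ A0 ↔ χ ∈ A1 := by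
        constructor
        · intro hm0
          by_contra hm1
          have e0 : A0.card = (A0.erase χ).card + 1 := (Finset.card_erase_add_one hm0).symm
          have e1 : (A1.erase χ) = A1 := Finset.erase_eq_of_notMem hm1
          rw [herase, e1] at e0
          omega
        · intro hm1
          by_contra hm0
          have e1 : A1.card = (A1.erase χ).card + 1 := (Finset.card_erase_add_one hm1).symm
          have e0 : (A0.erase χ) = A0 := Finset.erase_eq_of_notMem hm0
          rw [← herase, e0] at e1
          omega
      by_cases hv : v = χ
      · rw [hv]
        have m0 : χ ∈ A0 ↔ χ ∈ V0 ⊓ coordSub m R := by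
          rw [hA0]; simp
        have m1 : χ ∈ A1 ↔ χ ∈ V1 ⊓ coordSub m R := by
          rw [hA1]; simp
        rw [← m0, ← m1]
        exact hχmem
      · constructor
        · rintro ⟨hV, hR⟩
          exact ⟨(haux v hv hR).1 hV, hR⟩
        · rintro ⟨hV, hR⟩
          exact ⟨(haux v hv hR).2 hV, hR⟩
  ext v
  constructor
  · intro hv
    exact ((key U.card U le_rfl (Finset.Subset.refl U) v).1 ⟨hv, h0 hv⟩).1
  · intro hv
    exact ((key U.card U le_rfl (Finset.Subset.refl U) v).2 ⟨hv, h1 hv⟩).1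

lemma IsUC_join {q : (Fin m → ZMod 2) → ℝ} {V : Submodule (ZMod 2) (Fin m → ZMod 2)} {j : Fin m}
    (hVj : ∀ v ∈ V, v j = 0)
    (h0 : marg q (fun x => x j) 0 = 2⁻¹) (h1 : marg q (fun x => x j) 1 = 2⁻¹)
    (hc0 : IsUC (condDist q (fun x => x j) 0) V)
    (hc1 : IsUC (condDist q (fun x => x j) 1) V) :
    ∃ x0 x1 : Fin m → ZMod 2, q x0 ≠ 0 ∧ q x1 ≠ 0 ∧
      IsUC q (V ⊔ Submodule.span (ZMod 2) {x1 - x0}) ∧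
      finrank (ZMod 2) (V ⊔ Submodule.span (ZMod 2) {x1 - x0} : Submodule (ZMod 2) _)
        = finrank (ZMod 2) V + 1 := by
  have hVpos := natCard_pos V
  have hVinv : ((Nat.card V : ℝ))⁻¹ ≠ 0 := by positivity
  obtain ⟨x0, hx0⟩ := hc0
  obtain ⟨x1, hx1⟩ := hc1
  have hcd0 : condDist q (fun x => x j) 0 x0 ≠ 0 := by
    rw [hx0 x0]
    rw [if_pos (by simpa using V.zero_mem)]
    exact hVinv
  have hcd1 : condDist q (fun x => x j) 1 x1 ≠ 0 := by
    rw [hx1 x1]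
    rw [if_pos (by simpa using V.zero_mem)]
    exact hVinv
  obtain ⟨hx0j, hq0⟩ := condDist_ne_zero hcd0
  obtain ⟨hx1j, hq1⟩ := condDist_ne_zero hcd1
  set δ := x1 - x0 with hδ
  have hδj : δ j = 1 := by
    rw [hδ]
    show x1 j - x0 j = 1
    rw [hx0j, hx1j]
    ring
  have hδV : δ ∉ V := fun hin => by
    rw [hVj δ hin] at hδj
    exact one_ne_zero hδj.symm
  have hδ0 : δ ≠ 0 := fun hz => by
    rw [hz] at hδj
    exact one_ne_zero hδj.symm
  have hspan : ∀ u : Fin m → ZMod 2, u ∈ Submodule.span (ZMod 2) {δ} ↔ (u = 0 ∨ u = δ) := by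
    intro u
    rw [Submodule.mem_span_singleton]
    constructor
    · rintro ⟨a, rfl⟩
      rcases zmod2_cases a with ha | ha <;> subst ha
      · left; simp
      · right; simp
    · rintro (rfl | rfl)
      · exact ⟨0, by simp⟩
      · exact ⟨1, by simp⟩
  set V' : Submodule (ZMod 2) (Fin m → ZMod 2) := V ⊔ Submodule.span (ZMod 2) {δ} with hV'
  have hinf : V ⊓ Submodule.span (ZMod 2) {δ} = ⊥ := by
    ext u
    simp only [Submodule.mem_inf, Submodule.mem_bot]
    constructor
    · rintro ⟨hu, hs⟩
      rcases (hspan u).1 hs with rfl | rfl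
      · rfl
      · exact absurd hu hδV
    · rintro rfl
      exact ⟨V.zero_mem, Submodule.zero_mem _⟩
  have hfr : finrank (ZMod 2) V' = finrank (ZMod 2) V + 1 := by
    have h2 := Submodule.finrank_sup_add_finrank_inf_eq V (Submodule.span (ZMod 2) {δ})
    rw [hinf, finrank_bot, finrank_span_singleton hδ0] at h2
    rw [hV']
    omega
  have hcard' : (Nat.card V' : ℝ) = 2 * (Nat.card V : ℝ) := by
    rw [card_submodule, card_submodule, hfr]
    push_cast
    ring
  have hV'pos := natCard_pos V'
  have hsplit : ∀ u, u ∈ V' ↔ (u ∈ V ∨ u - δ ∈ V) := by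
    intro u
    rw [hV', Submodule.mem_sup]
    constructor
    · rintro ⟨v, hv, s, hs, rfl⟩
      rcases (hspan s).1 hs with rfl | rfl
      · left; simpa using hv
      · right; simpa using hv
    · rintro (hu | hu)
      · exact ⟨u, hu, 0, Submodule.zero_mem _, by simp⟩
      · exact ⟨u - δ, hu, δ, Submodule.mem_span_singleton_self δ, by ring⟩
  have hj0 : ∀ x : Fin m → ZMod 2, x - x0 ∈ V → x j = 0 := by
    intro x hx
    have := hVj _ hx
    have h' : x j - x0 j = 0 := this
    rw [hx0j] at h'
    linear_combination (norm := ring_nf) h'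
  have hj1 : ∀ x : Fin m → ZMod 2, x - x1 ∈ V → x j = 1 := by
    intro x hx
    have := hVj _ hx
    have h' : x j - x1 j = 0 := this
    rw [hx1j] at h'
    linear_combination (norm := ring_nf) h'
  have hVV' : V ⊔ Submodule.span (ZMod 2) {x1 - x0} = V' := by rw [hV', hδ]
  refine ⟨x0, x1, hq0, hq1, ?_, by rw [hVV']; exact hfr⟩
  rw [hVV']
  refine ⟨x0, fun x => ?_⟩
  have hm : marg q (fun y => y j) (x j) ≠ 0 := by
    rcases zmod2_cases (x j) with hx | hx <;> rw [hx]
    · rw [h0]; norm_num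
    · rw [h1]; norm_num
  have hrec : q x = marg q (fun y => y j) (x j) * condDist q (fun y => y j) (x j) x :=
    (condDist_mul hm).symm
  have hx01 : x - x1 = x - x0 - δ := by rw [hδ]; ring
  rcases zmod2_cases (x j) with hx | hx
  · rw [hrec, hx, h0, hx0 x]
    by_cases hmem : x - x0 ∈ V
    · rw [if_pos hmem, if_pos ((hsplit (x - x0)).2 (Or.inl hmem)), hcard']
      rw [mul_inv]
    · have hnot : x - x0 ∉ V' := by
        intro hc
        rcases (hsplit _).1 hc with hin | hin
        · exact hmem hin
        · have hin' : x - x1 ∈ V := by rw [hx01]; exact hin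
          have hj := hj1 x hin'
          rw [hx] at hj
          exact one_ne_zero hj.symm
      rw [if_neg hmem, if_neg hnot, mul_zero]
  · rw [hrec, hx, h1, hx1 x]
    by_cases hmem : x - x1 ∈ V
    · have hin : x - x0 ∈ V' := by
        refine (hsplit _).2 (Or.inr ?_)
        rw [← hx01]
        exact hmem
      rw [if_pos hmem, if_pos hin, hcard']
      rw [mul_inv]
    · have hnot : x - x0 ∉ V' := by
        intro hc
        rcases (hsplit _).1 hc with hin | hin
        · have hj := hj0 x hin
          rw [hx] at hj
          exact one_ne_zero hj
        · have hin' : x - x1 ∈ V := by rw [hx01]; exact hin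
          exact hmem hin'
      rw [if_neg hmem, if_neg hnot, mul_zero]

end S10
end Part5

section Part6
open Real Module Finset
open scoped Classical
namespace S10

variable {m : ℕ} {Y : Type*} [Fintype Y]

def atomMap (S : Finset (Fin m)) : (Fin m → ZMod 2) × Y → Y × ({i // i ∈ S} → ZMod 2) :=
  fun ω => (ω.2, restr S ω.1)

noncomputable def atomP (p : (Fin m → ZMod 2) × Y → ℝ) (S : Finset (Fin m))
    (a : Y × ({i // i ∈ S} → ZMod 2)) : ℝ := marg p (atomMap S) a

noncomputable def condA (p : (Fin m → ZMod 2) × Y → ℝ) (S : Finset (Fin m))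
    (a : Y × ({i // i ∈ S} → ZMod 2)) : (Fin m → ZMod 2) → ℝ :=
  fun x => (if restr S x = a.2 then p (x, a.1) else 0) / atomP p S a

lemma atomP_eq (p : (Fin m → ZMod 2) × Y → ℝ) (S : Finset (Fin m))
    (a : Y × ({i // i ∈ S} → ZMod 2)) :
    atomP p S a = ∑ x, (if restr S x = a.2 then p (x, a.1) else 0) := by
  unfold atomP marg atomMap
  rw [Fintype.sum_prod_type]
  refine Finset.sum_congr rfl fun x _ => ?_
  by_cases hr : restr S x = a.2
  · rw [if_pos hr, Finset.sum_eq_single a.1]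
    · rw [if_pos (show ((a.1 : Y), restr S x) = a by rw [hr])]
    · intro y' _ hy'
      rw [if_neg (fun hc => hy' (congrArg Prod.fst hc))]
    · intro hy; exact absurd (mem_univ a.1) hy
  · rw [if_neg hr]
    refine Finset.sum_eq_zero fun y' _ => ?_
    rw [if_neg (fun hc => hr (congrArg Prod.snd hc))]

lemma atomP_nonneg {p : (Fin m → ZMod 2) × Y → ℝ} (hp : ∀ ω, 0 ≤ p ω) (S : Finset (Fin m))
    (a : Y × ({i // i ∈ S} → ZMod 2)) : 0 ≤ atomP p S a := marg_nonneg hp _ a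

lemma sum_atomP {p : (Fin m → ZMod 2) × Y → ℝ} (S : Finset (Fin m)) :
    ∑ a, atomP p S a = ∑ ω, p ω := sum_marg p (atomMap S)

lemma condA_nonneg {p : (Fin m → ZMod 2) × Y → ℝ} (hp : ∀ ω, 0 ≤ p ω) (S : Finset (Fin m))
    (a : Y × ({i // i ∈ S} → ZMod 2)) (x : Fin m → ZMod 2) : 0 ≤ condA p S a x := by
  unfold condA
  refine div_nonneg ?_ (atomP_nonneg hp S a)
  by_cases hr : restr S x = a.2
  · rw [if_pos hr]; exact hp _
  · rw [if_neg hr]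

lemma sum_condA {p : (Fin m → ZMod 2) × Y → ℝ} {S : Finset (Fin m)}
    {a : Y × ({i // i ∈ S} → ZMod 2)} (h : atomP p S a ≠ 0) :
    ∑ x, condA p S a x = 1 := by
  unfold condA
  rw [← Finset.sum_div, ← atomP_eq]
  exact div_self h

lemma condA_ne_zero {p : (Fin m → ZMod 2) × Y → ℝ} {S : Finset (Fin m)}
    {a : Y × ({i // i ∈ S} → ZMod 2)} {x : Fin m → ZMod 2} (h : condA p S a x ≠ 0) :
    restr S x = a.2 ∧ p (x, a.1) ≠ 0 := by
  unfold condA at h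
  by_cases hr : restr S x = a.2
  · refine ⟨hr, fun hz => ?_⟩
    rw [if_pos hr, hz, zero_div] at h
    exact h rfl
  · rw [if_neg hr, zero_div] at h
    exact absurd rfl h

lemma condDist_atomMap_eq (p : (Fin m → ZMod 2) × Y → ℝ) (S : Finset (Fin m))
    (a : Y × ({i // i ∈ S} → ZMod 2)) :
    condDist p (atomMap S) a = marg (condA p S a) (fun x => (x, a.1)) := by
  funext ω
  obtain ⟨x, y⟩ := ω
  have hmarg : marg (condA p S a) (fun x => (x, a.1)) (x, y)
      = if a.1 = y then condA p S a x else 0 := by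
    unfold marg
    by_cases hy : a.1 = y
    · rw [if_pos hy, Finset.sum_eq_single x]
      · rw [if_pos (by rw [hy] : ((x, a.1) : _ × Y) = (x, y))]
      · intro x' _ hx'
        rw [if_neg (fun hc => hx' (congrArg Prod.fst hc))]
      · intro hx; exact absurd (mem_univ x) hx
    · rw [if_neg hy]
      refine Finset.sum_eq_zero fun x' _ => ?_
      rw [if_neg (fun hc => hy (congrArg Prod.snd hc))]
  rw [hmarg]
  unfold condDist
  by_cases hy : a.1 = y
  · by_cases hr : restr S x = a.2
    · rw [if_pos hy, if_pos (show atomMap S (x, y) = a by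
        show ((y : Y), restr S x) = a
        rw [hr, ← hy])]
      unfold condA atomP
      rw [if_pos hr, hy]
    · rw [if_pos hy, if_neg (show atomMap S (x, y) ≠ a from
        fun hc => hr (congrArg Prod.snd hc)), zero_div]
      unfold condA atomP
      rw [if_neg hr, zero_div]
  · rw [if_neg hy, if_neg (show atomMap S (x, y) ≠ a from
      fun hc => hy ((congrArg Prod.fst hc).symm)), zero_div]

lemma H2_condDist_atomMap (p : (Fin m → ZMod 2) × Y → ℝ) (S : Finset (Fin m))
    (a : Y × ({i // i ∈ S} → ZMod 2)) :
    H2 (condDist p (atomMap S) a) = H2 (condA p S a) := by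
  rw [condDist_atomMap_eq]
  exact H2_marg_inj (fun x x' h => congrArg Prod.fst h)

lemma master_atoms {p : (Fin m → ZMod 2) × Y → ℝ} (hp : ∀ ω, 0 ≤ p ω) (S : Finset (Fin m)) :
    H2 p = H2 (marg p (atomMap S)) + ∑ a, atomP p S a * H2 (condA p S a) := by
  rw [H2_master p hp (atomMap S)]
  congr 1
  refine Finset.sum_congr rfl fun a _ => ?_
  rw [H2_condDist_atomMap]
  rfl

def ext1 {S : Finset (Fin m)} {j : Fin m} (hj : j ∉ S) (w : {i // i ∈ S} → ZMod 2)
    (b : ZMod 2) : {i // i ∈ insert j S} → ZMod 2 :=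
  fun i => if h : i.1 ∈ S then w ⟨i.1, h⟩ else b

lemma restr_insert_iff {S : Finset (Fin m)} {j : Fin m} (hj : j ∉ S)
    (x : Fin m → ZMod 2) (w : {i // i ∈ S} → ZMod 2) (b : ZMod 2) :
    restr (insert j S) x = ext1 hj w b ↔ (restr S x = w ∧ x j = b) := by
  constructor
  · intro h
    constructor
    · funext i
      have := congrFun h ⟨i.1, Finset.mem_insert_of_mem i.2⟩
      unfold restr ext1 at this
      rw [dif_pos i.2] at this
      exact this
    · have := congrFun h ⟨j, Finset.mem_insert_self j S⟩
      unfold restr ext1 at this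
      rw [dif_neg hj] at this
      exact this
  · rintro ⟨hw, hb⟩
    funext i
    unfold restr ext1
    by_cases hiS : i.1 ∈ S
    · rw [dif_pos hiS]
      exact congrFun hw ⟨i.1, hiS⟩
    · rw [dif_neg hiS]
      have hij : i.1 = j := by
        rcases Finset.mem_insert.1 i.2 with h | h
        · exact h
        · exact absurd h hiS
      rw [hij]
      exact hb

lemma marg_eval {p : (Fin m → ZMod 2) × Y → ℝ} {S : Finset (Fin m)} {j : Fin m}
    (hj : j ∉ S) (y : Y) (w : {i // i ∈ S} → ZMod 2) (b : ZMod 2) :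
    marg (condA p S (y, w)) (fun x => x j) b
      = atomP p (insert j S) (y, ext1 hj w b) / atomP p S (y, w) := by
  rw [marg_eq_sum_filter]
  have key : ∀ x : Fin m → ZMod 2, x j = b →
      condA p S (y, w) x
        = (if restr (insert j S) x = ext1 hj w b then p (x, y) else 0) / atomP p S (y, w) := by
    intro x h1
    unfold condA
    by_cases h2 : restr S x = w
    · rw [if_pos h2, if_pos ((restr_insert_iff hj x w b).2 ⟨h2, h1⟩)]
    · rw [if_neg h2, if_neg (fun hc => h2 ((restr_insert_iff hj x w b).1 hc).1), zero_div]
  refine Eq.trans (Finset.sum_congr rfl (fun x hx => key x (by simpa using hx))) ?_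
  rw [← Finset.sum_div]
  congr 1
  rw [atomP_eq]
  refine Finset.sum_subset (Finset.subset_univ _) fun x _ hx => ?_
  have h1 : ¬ x j = b := by simpa using hx
  exact if_neg (fun hc => h1 ((restr_insert_iff hj x w b).1 hc).2)

lemma condDist_eval {p : (Fin m → ZMod 2) × Y → ℝ} {S : Finset (Fin m)} {j : Fin m}
    (hj : j ∉ S) {y : Y} {w : {i // i ∈ S} → ZMod 2} (b : ZMod 2)
    (hπ : atomP p S (y, w) ≠ 0) :
    condDist (condA p S (y, w)) (fun x => x j) b = condA p (insert j S) (y, ext1 hj w b) := by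
  funext x
  unfold condDist
  rw [marg_eval hj y w b]
  unfold condA
  by_cases hb' : atomP p (insert j S) (y, ext1 hj w b) = 0
  · rw [hb', zero_div, div_zero, div_zero]
  · by_cases h1 : x j = b
    · by_cases h2 : restr S x = w
      · rw [if_pos h1, if_pos h2, if_pos ((restr_insert_iff hj x w b).2 ⟨h2, h1⟩)]
        rw [div_div_div_cancel_right₀]
        exact hπ
      · rw [if_pos h1, if_neg h2,
          if_neg (fun hc => h2 ((restr_insert_iff hj x w b).1 hc).1)]
        rw [zero_div, zero_div, zero_div]
    · rw [if_neg h1, if_neg (fun hc => h1 ((restr_insert_iff hj x w b).1 hc).2)]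
      rw [zero_div, zero_div]

def restr2 {S S' : Finset (Fin m)} (h : S ⊆ S') (w' : {i // i ∈ S'} → ZMod 2) :
    {i // i ∈ S} → ZMod 2 := fun i => w' ⟨i.1, h i.2⟩

lemma restr2_restr {S S' : Finset (Fin m)} (h : S ⊆ S') (x : Fin m → ZMod 2) :
    restr2 h (restr S' x) = restr S x := rfl

lemma marg_restr_compat {p : (Fin m → ZMod 2) × Y → ℝ} {S S' : Finset (Fin m)} (h : S ⊆ S')
    {y : Y} {w : {i // i ∈ S} → ZMod 2} {w' : {i // i ∈ S'} → ZMod 2}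
    (hc : restr2 h w' = w) :
    marg (condA p S (y, w)) (restr S') w' = atomP p S' (y, w') / atomP p S (y, w) := by
  rw [marg_eq_sum_filter]
  have key : ∀ x : Fin m → ZMod 2, restr S' x = w' →
      condA p S (y, w) x = (if restr S' x = w' then p (x, y) else 0) / atomP p S (y, w) := by
    intro x h1
    have h2 : restr S x = w := by rw [← hc, ← h1, restr2_restr]
    unfold condA
    rw [if_pos h2, if_pos h1]
  refine Eq.trans (Finset.sum_congr rfl (fun x hx => key x (by simpa using hx))) ?_
  rw [← Finset.sum_div]
  congr 1
  rw [atomP_eq]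
  refine Finset.sum_subset (Finset.subset_univ _) fun x _ hx => ?_
  have h1 : ¬ restr S' x = w' := by simpa using hx
  exact if_neg h1

lemma marg_ne_zero_compat {p : (Fin m → ZMod 2) × Y → ℝ} {S S' : Finset (Fin m)} (h : S ⊆ S')
    {y : Y} {w : {i // i ∈ S} → ZMod 2} {w' : {i // i ∈ S'} → ZMod 2}
    (hm : marg (condA p S (y, w)) (restr S') w' ≠ 0) : restr2 h w' = w := by
  obtain ⟨x, hx⟩ := Finset.exists_ne_zero_of_sum_ne_zero hm
  have hx2 := hx.2
  by_cases h1 : restr S' x = w'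
  · have hca : condA p S (y, w) x ≠ 0 := by
      intro hz
      exact hx2 (by rw [if_pos h1, hz])
    have := (condA_ne_zero hca).1
    rw [← h1, restr2_restr]
    exact this
  · exact absurd (if_neg h1) hx2

lemma condDist_restr {p : (Fin m → ZMod 2) × Y → ℝ} {S S' : Finset (Fin m)} (h : S ⊆ S')
    {y : Y} {w : {i // i ∈ S} → ZMod 2} {w' : {i // i ∈ S'} → ZMod 2}
    (hπ : atomP p S (y, w) ≠ 0) (hc : restr2 h w' = w) :
    condDist (condA p S (y, w)) (restr S') w' = condA p S' (y, w') := by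
  funext x
  unfold condDist
  rw [marg_restr_compat h hc]
  unfold condA
  by_cases hb' : atomP p S' (y, w') = 0
  · rw [hb', zero_div, div_zero, div_zero]
  · by_cases h1 : restr S' x = w'
    · have h2 : restr S x = w := by rw [← hc, ← h1, restr2_restr]
      rw [if_pos h1, if_pos h2, if_pos h1]
      rw [div_div_div_cancel_right₀]
      exact hπ
    · rw [if_neg h1, if_neg h1, zero_div, zero_div]

end S10
end Part6

section Part7
open Real Module Finset
open scoped Classical
namespace S10

variable {m : ℕ} {Y : Type*} [Fintype Y]

lemma logb2_pow (n : ℕ) : Real.logb 2 ((2:ℝ) ^ n) = n := by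
  rw [Real.logb_pow]; simp

lemma inputJoint_nonneg {W : (Fin m → ZMod 2) → Y → ℝ} (hW : ∀ x y, 0 ≤ W x y) :
    ∀ ω, 0 ≤ inputJoint W ω := fun ω => div_nonneg (hW ω.1 ω.2) (by positivity)

lemma sum_y_inputJoint {W : (Fin m → ZMod 2) → Y → ℝ} (h1 : ∀ x, ∑ y, W x y = 1)
    (x : Fin m → ZMod 2) : ∑ y, inputJoint W (x, y) = ((2:ℝ) ^ m)⁻¹ := by
  unfold inputJoint
  rw [← Finset.sum_div, h1 x, one_div]

lemma card_vec : Fintype.card (Fin m → ZMod 2) = 2 ^ m := by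
  rw [Fintype.card_fun, ZMod.card 2, Fintype.card_fin]

lemma sum_inputJoint {W : (Fin m → ZMod 2) → Y → ℝ} (h1 : ∀ x, ∑ y, W x y = 1) :
    ∑ ω, inputJoint W ω = 1 := by
  rw [Fintype.sum_prod_type]
  rw [Finset.sum_congr rfl (fun x _ => sum_y_inputJoint h1 x), Finset.sum_const,
    nsmul_eq_mul, Finset.card_univ, card_vec]
  push_cast
  exact mul_inv_cancel₀ (by positivity : ((2:ℝ) ^ m) ≠ 0)

lemma card_restr_fiber (J : Finset (Fin m)) (v : {i // i ∈ J} → ZMod 2) :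
    (univ.filter fun x : Fin m → ZMod 2 => restr J x = v).card = 2 ^ (m - J.card) := by
  have e : {x : Fin m → ZMod 2 // restr J x = v} ≃ ({i // i ∈ Jᶜ} → ZMod 2) :=
    { toFun := fun x i => x.1 i.1
      invFun := fun z => ⟨fun i => if h : i ∈ J then v ⟨i, h⟩ else z ⟨i, Finset.mem_compl.2 h⟩,
        by funext i; exact dif_pos i.2⟩
      left_inv := by
        intro x
        apply Subtype.ext
        funext i
        by_cases h : i ∈ J
        · show (if h' : i ∈ J then v ⟨i, h'⟩ else _) = x.1 i
          rw [dif_pos h]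
          exact (congrFun x.2 ⟨i, h⟩).symm
        · show (if h' : i ∈ J then v ⟨i, h'⟩ else x.1 i) = x.1 i
          rw [dif_neg h]
      right_inv := by
        intro z
        funext i
        have hi : i.1 ∉ J := Finset.mem_compl.1 i.2
        show (if h : i.1 ∈ J then v ⟨i.1, h⟩ else z ⟨i.1, _⟩) = z i
        rw [dif_neg hi] }
  have hcard : (univ.filter fun x : Fin m → ZMod 2 => restr J x = v).card
      = Fintype.card ({i // i ∈ Jᶜ} → ZMod 2) := by
    rw [← Fintype.card_subtype, Fintype.card_congr e]
  rw [hcard, Fintype.card_fun, ZMod.card 2, Fintype.card_coe, Finset.card_compl,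
    Fintype.card_fin]

lemma marg_fst {α β : Type*} [Fintype α] [Fintype β] (p : α × β → ℝ) (x : α) :
    marg p Prod.fst x = ∑ y, p (x, y) := by
  unfold marg
  rw [Fintype.sum_prod_type_right]
  exact Finset.sum_congr rfl fun y _ => by simp

lemma marg_marg {Ω A B : Type*} [Fintype Ω] [Fintype A] [Fintype B]
    (p : Ω → ℝ) (f : Ω → A) (σ : A → B) (b : B) :
    marg (marg p f) σ b = marg p (fun ω => σ (f ω)) b := by
  unfold marg
  have step1 : ∀ a : A, (if σ a = b then (∑ ω, if f ω = a then p ω else 0) else 0)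
      = ∑ ω, (if f ω = a then (if σ a = b then p ω else 0) else 0) := by
    intro a
    by_cases h : σ a = b
    · rw [if_pos h]
      refine Finset.sum_congr rfl fun ω _ => ?_
      by_cases h2 : f ω = a
      · rw [if_pos h2, if_pos h, if_pos h2]
      · rw [if_neg h2, if_neg h2]
    · rw [if_neg h]
      refine (Finset.sum_eq_zero fun ω _ => ?_).symm
      by_cases h2 : f ω = a
      · rw [if_pos h2, if_neg h]
      · rw [if_neg h2]
  rw [Finset.sum_congr rfl (fun a _ => step1 a), Finset.sum_comm]
  refine Finset.sum_congr rfl fun ω _ => ?_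
  have col : ∀ a : A, (if f ω = a then (if σ a = b then p ω else 0) else 0)
      = (if a = f ω then (if σ a = b then p ω else 0) else 0) := by
    intro a
    by_cases h : f ω = a
    · rw [if_pos h, if_pos h.symm]
    · rw [if_neg h, if_neg (fun hc => h hc.symm)]
  rw [Finset.sum_congr rfl (fun a _ => col a),
    Finset.sum_ite_eq' univ (f ω) (fun a => if σ a = b then p ω else 0)]
  rw [if_pos (mem_univ (f ω))]

lemma marg_fst_restr {W : (Fin m → ZMod 2) → Y → ℝ} (h1 : ∀ x, ∑ y, W x y = 1)
    (J : Finset (Fin m)) (v : {i // i ∈ J} → ZMod 2) :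
    marg (inputJoint W) (fun ω => restr J ω.1) v = ((2:ℝ) ^ J.card)⁻¹ := by
  rw [← marg_marg (inputJoint W) Prod.fst (restr J) v]
  have hfst : marg (inputJoint W) Prod.fst = fun x => ((2:ℝ) ^ m)⁻¹ := by
    funext x
    rw [marg_fst, sum_y_inputJoint h1 x]
  rw [hfst, marg_eq_sum_filter, Finset.sum_const, nsmul_eq_mul]
  have hcount : (univ.filter fun x : Fin m → ZMod 2 => restr J x = v).card
      = 2 ^ (m - J.card) := card_restr_fiber J v
  rw [Finset.filter_congr_decidable] at hcount ⊢
  rw [hcount]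
  have hle : J.card ≤ m := by
    have := Finset.card_le_univ J
    rwa [Fintype.card_fin] at this
  have hpow : (2:ℝ) ^ (m - J.card) * (2:ℝ) ^ J.card = 2 ^ m := by
    rw [← pow_add]
    congr 1
    omega
  push_cast
  have h2m : ((2:ℝ) ^ m) ≠ 0 := by positivity
  have h2J : ((2:ℝ) ^ J.card) ≠ 0 := by positivity
  field_simp
  linarith [hpow]

lemma H2_margX {W : (Fin m → ZMod 2) → Y → ℝ} (h1 : ∀ x, ∑ y, W x y = 1)
    (J : Finset (Fin m)) :
    H2 (marg (inputJoint W) (fun ω => restr J ω.1)) = (J.card : ℝ) := by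
  have hmarg : marg (inputJoint W) (fun ω => restr J ω.1)
      = fun _ : {i // i ∈ J} → ZMod 2 => ((2:ℝ) ^ J.card)⁻¹ :=
    funext (marg_fst_restr h1 J)
  rw [hmarg]
  have hcardA : (Fintype.card ({i // i ∈ J} → ZMod 2) : ℝ) = (2:ℝ) ^ J.card := by
    rw [Fintype.card_fun, ZMod.card 2, Fintype.card_coe]
    push_cast
    ring
  have h := H2_two_valued (q := fun _ : {i // i ∈ J} → ZMod 2 => ((2:ℝ) ^ J.card)⁻¹)
    (c := ((2:ℝ) ^ J.card)⁻¹) (by positivity) (fun a => Or.inr rfl)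
    (by rw [Finset.sum_const, nsmul_eq_mul, Finset.card_univ, hcardA]; field_simp)
  rw [h, Real.logb_inv, neg_neg, logb2_pow]

lemma pair_inj (J : Finset (Fin m)) :
    Function.Injective (fun ω : (Fin m → ZMod 2) × Y =>
      (restr J ω.1, (ω.2, restr Jᶜ ω.1))) := by
  intro ω ω' h
  have hJ : restr J ω.1 = restr J ω'.1 := congrArg Prod.fst h
  have h2 := congrArg Prod.snd h
  have hy : ω.2 = ω'.2 := congrArg Prod.fst h2
  have hJc : restr Jᶜ ω.1 = restr Jᶜ ω'.1 := congrArg Prod.snd h2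
  have hx : ω.1 = ω'.1 := by
    funext i
    by_cases hi : i ∈ J
    · exact congrFun hJ ⟨i, hi⟩
    · exact congrFun hJc ⟨i, Finset.mem_compl.2 hi⟩
  exact Prod.ext hx hy

lemma atomMap_univ_inj :
    Function.Injective (atomMap (univ : Finset (Fin m)) : (Fin m → ZMod 2) × Y → _) := by
  intro ω ω' h
  have hy : ω.2 = ω'.2 := congrArg Prod.fst h
  have hr : restr univ ω.1 = restr univ ω'.1 := congrArg Prod.snd h
  have hx : ω.1 = ω'.1 := funext fun i => congrFun hr ⟨i, mem_univ i⟩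
  exact Prod.ext hx hy

lemma condMI_formula {W : (Fin m → ZMod 2) → Y → ℝ} (h1 : ∀ x, ∑ y, W x y = 1)
    (J : Finset (Fin m)) :
    condMI W J = (J.card : ℝ) + H2 (marg (inputJoint W) (atomMap Jᶜ))
      - H2 (inputJoint W) := by
  have e1 : H2 (marg (inputJoint W) (fun q : (Fin m → ZMod 2) × Y =>
      fun i : {i // i ∈ J} => q.1 i.1)) = (J.card : ℝ) := H2_margX h1 J
  have e3 : H2 (marg (inputJoint W) (fun ω : (Fin m → ZMod 2) × Y =>
      ((fun i : {i // i ∈ J} => ω.1 i.1), (ω.2, fun i : {i // i ∈ Jᶜ} => ω.1 i.1))))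
      = H2 (inputJoint W) := H2_marg_inj (pair_inj J)
  have e2 : H2 (marg (inputJoint W) (fun q : (Fin m → ZMod 2) × Y =>
      (q.2, fun i : {i // i ∈ Jᶜ} => q.1 i.1))) = H2 (marg (inputJoint W) (atomMap Jᶜ)) := rfl
  show H2 (marg (inputJoint W) _) + H2 (marg (inputJoint W) _) - H2 (marg (inputJoint W) _) = _
  rw [e1, e3]
  linarith [e2]

lemma condMI_empty {W : (Fin m → ZMod 2) → Y → ℝ} (h1 : ∀ x, ∑ y, W x y = 1) :
    condMI W (∅ : Finset (Fin m)) = 0 := by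
  rw [condMI_formula h1 ∅]
  have : H2 (marg (inputJoint W) (atomMap (∅ : Finset (Fin m))ᶜ)) = H2 (inputJoint W) := by
    rw [Finset.compl_empty]
    exact H2_marg_inj atomMap_univ_inj
  rw [this]
  simp

end S10
end Part7

section Part8
open Real Module Finset
open scoped Classical
namespace S10

variable {m : ℕ}

def extL (J : Finset (Fin m)) : ({j // j ∈ J} → ZMod 2) →ₗ[ZMod 2] (Fin m → ZMod 2) where
  toFun u := fun i => if h : i ∈ J then u ⟨i, h⟩ else 0
  map_add' u v := by
    funext i
    by_cases h : i ∈ J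
    · show (if h' : i ∈ J then (u + v) ⟨i, h'⟩ else 0) = _
      rw [dif_pos h]
      show u ⟨i, h⟩ + v ⟨i, h⟩ = (if h' : i ∈ J then u ⟨i, h'⟩ else 0) + (if h' : i ∈ J then v ⟨i, h'⟩ else 0)
      rw [dif_pos h, dif_pos h]
    · show (if h' : i ∈ J then (u + v) ⟨i, h'⟩ else 0) = _
      rw [dif_neg h]
      show (0 : ZMod 2) = (if h' : i ∈ J then u ⟨i, h'⟩ else 0) + (if h' : i ∈ J then v ⟨i, h'⟩ else 0)
      rw [dif_neg h, dif_neg h, add_zero]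
  map_smul' c u := by
    funext i
    by_cases h : i ∈ J
    · show (if h' : i ∈ J then (c • u) ⟨i, h'⟩ else 0) = _
      rw [dif_pos h]
      show c • u ⟨i, h⟩ = c • (if h' : i ∈ J then u ⟨i, h'⟩ else 0)
      rw [dif_pos h]
    · show (if h' : i ∈ J then (c • u) ⟨i, h'⟩ else 0) = _
      rw [dif_neg h]
      show (0 : ZMod 2) = c • (if h' : i ∈ J then u ⟨i, h'⟩ else 0)
      rw [dif_neg h, smul_zero]

lemma extL_apply (J : Finset (Fin m)) (u : {j // j ∈ J} → ZMod 2) (i : Fin m) :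
    extL J u i = if h : i ∈ J then u ⟨i, h⟩ else 0 := rfl

lemma restr_extL (J : Finset (Fin m)) (u : {j // j ∈ J} → ZMod 2) :
    restr J (extL J u) = u := by
  funext i
  show (if h : i.1 ∈ J then u ⟨i.1, h⟩ else 0) = u i
  rw [dif_pos i.2]

lemma extL_mem_coordSub (J : Finset (Fin m)) (u : {j // j ∈ J} → ZMod 2) :
    extL J u ∈ coordSub m J := by
  intro i hi
  show (if h : i ∈ J then u ⟨i, h⟩ else 0) = 0
  rw [dif_neg hi]

lemma extL_restr (J : Finset (Fin m)) {x : Fin m → ZMod 2} (hx : x ∈ coordSub m J) :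
    extL J (restr J x) = x := by
  funext i
  show (if h : i ∈ J then x i else 0) = x i
  by_cases h : i ∈ J
  · rw [dif_pos h]
  · rw [dif_neg h]
    exact (hx i h).symm

lemma finrank_comap_extL (J : Finset (Fin m)) (U : Submodule (ZMod 2) (Fin m → ZMod 2)) :
    finrank (ZMod 2) (U.comap (extL J)) = finrank (ZMod 2) (U ⊓ coordSub m J : Submodule (ZMod 2) (Fin m → ZMod 2)) := by
  refine LinearEquiv.finrank_eq ?_
  refine
    { toFun := fun u => ⟨extL J u.1, ⟨u.2, extL_mem_coordSub J u.1⟩⟩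
      invFun := fun v => ⟨restr J v.1, ?_⟩
      map_add' := fun u v => Subtype.ext (by
        show extL J (u.1 + v.1) = extL J u.1 + extL J v.1
        exact map_add (extL J) u.1 v.1)
      map_smul' := fun c u => Subtype.ext (by
        show extL J (c • u.1) = c • extL J u.1
        exact map_smul (extL J) c u.1)
      left_inv := fun u => Subtype.ext (restr_extL J u.1)
      right_inv := fun v => Subtype.ext (extL_restr J v.2.2) }
  show extL J (restr J v.1) ∈ U
  rw [extL_restr J v.2.2]
  exact v.2.1

lemma mulVecLin_submatrix {k : ℕ} (A : Matrix (Fin k) (Fin m) (ZMod 2)) (J : Finset (Fin m)) :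
    (A.submatrix id (fun j : {j // j ∈ J} => (j : Fin m))).mulVecLin
      = A.mulVecLin ∘ₗ extL J := by
  apply LinearMap.ext
  intro u
  funext i
  show (A.submatrix id (fun j : {j // j ∈ J} => (j : Fin m))).mulVec u i
    = A.mulVec (extL J u) i
  unfold Matrix.mulVec dotProduct
  simp only [Matrix.submatrix_apply, id]
  have hvan : ∀ i' ∈ univ, i' ∉ J → A i i' * extL J u i' = 0 := by
    intro i' _ hi'
    rw [extL_apply, dif_neg hi', mul_zero]
  rw [← Finset.sum_subset (Finset.subset_univ J) hvan]
  rw [← Finset.sum_attach J (fun i' => A i i' * extL J u i')]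
  rw [Finset.univ_eq_attach]
  refine Finset.sum_congr rfl fun j' _ => ?_
  rw [extL_apply, dif_pos j'.2]

lemma colRank_eq {k : ℕ} (A : Matrix (Fin k) (Fin m) (ZMod 2)) (J : Finset (Fin m)) :
    (colRank A J : ℤ) = (J.card : ℤ)
      - (finrank (ZMod 2) (LinearMap.ker A.mulVecLin ⊓ coordSub m J :
          Submodule (ZMod 2) (Fin m → ZMod 2)) : ℤ) := by
  have hrank : colRank A J
      = finrank (ZMod 2) (LinearMap.range (A.mulVecLin ∘ₗ extL J)) := by
    unfold colRank
    have : (A.submatrix id (fun j : {j // j ∈ J} => (j : Fin m))).rank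
        = finrank (ZMod 2)
          (LinearMap.range (A.submatrix id (fun j : {j // j ∈ J} => (j : Fin m))).mulVecLin) :=
      rfl
    rw [this, mulVecLin_submatrix]
  have hrn := LinearMap.finrank_range_add_finrank_ker (A.mulVecLin ∘ₗ extL J)
  have hdom : finrank (ZMod 2) ({j // j ∈ J} → ZMod 2) = J.card := by
    rw [finrank_pi]
    exact Fintype.card_coe J
  have hker : LinearMap.ker (A.mulVecLin ∘ₗ extL J)
      = (LinearMap.ker A.mulVecLin).comap (extL J) := LinearMap.ker_comp _ _
  rw [hdom, hker, finrank_comap_extL] at hrn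
  rw [hrank]
  omega

end S10
end Part8

section Part9
open Real Module Finset
open scoped Classical
namespace S10

variable {m : ℕ} {Y : Type*} [Fintype Y]

/-- The main structure theorem: all conditional distributions of an extremal BMAC are
uniform on cosets of subspaces of the prescribed dimensions. -/
lemma claimC {p : (Fin m → ZMod 2) × Y → ℝ} {r : Finset (Fin m) → ℤ}
    (hp : ∀ ω, 0 ≤ p ω) (hsum : ∑ ω, p ω = 1)
    (hG : ∀ S : Finset (Fin m),
      H2 p - H2 (marg p (atomMap S)) = (((Sᶜ.card : ℤ) - r Sᶜ : ℤ) : ℝ)) :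
    ∀ (S : Finset (Fin m)) (a : Y × ({i // i ∈ S} → ZMod 2)), atomP p S a ≠ 0 →
      ∃ V : Submodule (ZMod 2) (Fin m → ZMod 2), V ≤ coordSub m Sᶜ ∧ IsUC (condA p S a) V ∧
        (finrank (ZMod 2) V : ℤ) = (Sᶜ.card : ℤ) - r Sᶜ := by
  have hr0 : ((∅ : Finset (Fin m)).card : ℤ) - r ∅ = 0 := by
    have h := hG (univ : Finset (Fin m))
    rw [H2_marg_inj atomMap_univ_inj, sub_self, Finset.compl_univ] at h
    exact_mod_cast h.symm
  suffices key : ∀ (n : ℕ) (S : Finset (Fin m)), Sᶜ.card ≤ n →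
      ∀ a : Y × ({i // i ∈ S} → ZMod 2), atomP p S a ≠ 0 →
      ∃ V : Submodule (ZMod 2) (Fin m → ZMod 2), V ≤ coordSub m Sᶜ ∧ IsUC (condA p S a) V ∧
        (finrank (ZMod 2) V : ℤ) = (Sᶜ.card : ℤ) - r Sᶜ by
    intro S a ha
    exact key Sᶜ.card S le_rfl a ha
  intro n
  induction n with
  | zero =>
    intro S hc a ha
    have hScompl : Sᶜ = ∅ := Finset.card_eq_zero.1 (Nat.le_zero.1 hc)
    have hmem : ∀ i, i ∈ S := by
      intro i
      by_contra hi
      have : i ∈ Sᶜ := Finset.mem_compl.2 hi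
      rw [hScompl] at this
      exact absurd this (Finset.notMem_empty i)
    set xw : Fin m → ZMod 2 := fun i => a.2 ⟨i, hmem i⟩ with hxw
    have hres : ∀ x : Fin m → ZMod 2, restr S x = a.2 ↔ x = xw := by
      intro x
      constructor
      · intro h
        funext i
        exact congrFun h ⟨i, hmem i⟩
      · rintro rfl
        funext i
        show a.2 ⟨i.1, hmem i.1⟩ = a.2 i
        exact congrArg a.2 (Subtype.ext rfl)
    have hπ : atomP p S a = p (xw, a.1) := by
      rw [atomP_eq]
      have e : ∀ x : Fin m → ZMod 2,
          (if restr S x = a.2 then p (x, a.1) else 0) = (if x = xw then p (x, a.1) else 0) := by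
        intro x
        by_cases h : restr S x = a.2
        · rw [if_pos h, if_pos ((hres x).1 h)]
        · rw [if_neg h, if_neg (fun hc' => h ((hres x).2 hc'))]
      rw [Finset.sum_congr rfl (fun x _ => e x),
        Finset.sum_ite_eq' univ xw (fun x => p (x, a.1)), if_pos (mem_univ xw)]
    have hcardbot : (Nat.card (⊥ : Submodule (ZMod 2) (Fin m → ZMod 2)) : ℝ) = 1 := by
      rw [card_submodule, finrank_bot, pow_zero]
      norm_num
    refine ⟨⊥, bot_le, ⟨xw, fun x => ?_⟩, ?_⟩
    · have hbmem : (x - xw ∈ (⊥ : Submodule (ZMod 2) (Fin m → ZMod 2))) ↔ x = xw := by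
        rw [Submodule.mem_bot, sub_eq_zero]
      unfold condA
      by_cases hx : x = xw
      · rw [if_pos ((hres x).2 hx), if_pos (hbmem.2 hx), hcardbot, inv_one, hπ, hx]
        exact div_self (by rw [hπ] at ha; exact ha)
      · rw [if_neg (fun hc' => hx ((hres x).1 hc')), if_neg (fun hc' => hx (hbmem.1 hc')),
          zero_div]
    · rw [finrank_bot, hScompl]
      exact_mod_cast hr0.symm
  | succ n ih =>
    intro S hc a ha
    by_cases hle : Sᶜ.card ≤ n
    · exact ih S hle a ha
    have hcn : Sᶜ.card = n + 1 := by omega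
    have hTne : Sᶜ.Nonempty := Finset.card_pos.1 (by omega)
    obtain ⟨y, w⟩ := a
    -- the relevant integer quantities
    set dzS : ℤ := (Sᶜ.card : ℤ) - r Sᶜ with hdzS
    have compl_card : ∀ j ∈ Sᶜ, (insert j S)ᶜ.card = n := by
      intro j hj
      rw [Finset.compl_insert, Finset.card_erase_of_mem hj, hcn]
      omega
    -- per-atom chain rule
    have peratom : ∀ (y' : Y) (w' : {i // i ∈ S} → ZMod 2), atomP p S (y', w') ≠ 0 →
        ∀ j ∈ Sᶜ,
        H2 (condA p S (y', w'))
          = H2 (marg (condA p S (y', w')) (fun x => x j))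
            + ((((insert j S)ᶜ.card : ℤ) - r (insert j S)ᶜ : ℤ) : ℝ) := by
      intro y' w' hpos j hj
      have hjS : j ∉ S := Finset.mem_compl.1 hj
      have hqnn : ∀ x, 0 ≤ condA p S (y', w') x := condA_nonneg hp S (y', w')
      rw [H2_master (condA p S (y', w')) hqnn (fun x => x j)]
      congr 1
      have hterm : ∀ b : ZMod 2,
          marg (condA p S (y', w')) (fun x => x j) b
            * H2 (condDist (condA p S (y', w')) (fun x => x j) b)
          = marg (condA p S (y', w')) (fun x => x j) b
            * ((((insert j S)ᶜ.card : ℤ) - r (insert j S)ᶜ : ℤ) : ℝ) := by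
        intro b
        by_cases hlam : marg (condA p S (y', w')) (fun x => x j) b = 0
        · rw [hlam, zero_mul, zero_mul]
        · congr 1
          have hπb : atomP p (insert j S) (y', ext1 hjS w' b) ≠ 0 := by
            intro hz
            rw [marg_eval hjS y' w' b, hz, zero_div] at hlam
            exact hlam rfl
          obtain ⟨V, hV1, hV2, hV3⟩ := ih (insert j S) (le_of_eq (compl_card j hj))
            (y', ext1 hjS w' b) hπb
          rw [condDist_eval hjS b hpos, H2_IsUC hV2]
          exact_mod_cast congrArg (Int.cast : ℤ → ℝ) hV3
      rw [Finset.sum_congr rfl (fun b _ => hterm b), ← Finset.sum_mul]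
      have hlamsum : ∑ b, marg (condA p S (y', w')) (fun x => x j) b = 1 := by
        rw [sum_marg]
        exact sum_condA hpos
      rw [hlamsum, one_mul]
    -- bit marginal facts
    have hbitfacts : ∀ (y' : Y) (w' : {i // i ∈ S} → ZMod 2), atomP p S (y', w') ≠ 0 →
        ∀ j, (∀ b, 0 ≤ marg (condA p S (y', w')) (fun x => x j) b) ∧
          marg (condA p S (y', w')) (fun x => x j) 0
            + marg (condA p S (y', w')) (fun x => x j) 1 = 1 := by
      intro y' w' hpos j
      constructor
      · exact fun b => marg_nonneg (condA_nonneg hp S (y', w')) _ b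
      · rw [← zmod2_sum (fun b => marg (condA p S (y', w')) (fun x => x j) b), sum_marg]
        exact sum_condA hpos
    -- the average over atoms
    have havg : ∑ a', atomP p S a' * H2 (condA p S a') = (dzS : ℝ) := by
      have := master_atoms hp S
      have h2 := hG S
      rw [hdzS]
      linarith [this, h2]
    have hweights : (∀ a', 0 ≤ atomP p S a') ∧ ∑ a', atomP p S a' = 1 :=
      ⟨fun a' => atomP_nonneg hp S a', by rw [sum_atomP]; exact hsum⟩
    by_cases hcase : ∃ j ∈ Sᶜ, dzS ≤ ((insert j S)ᶜ.card : ℤ) - r (insert j S)ᶜ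
    · -- Case 1 : some direction is deterministic
      obtain ⟨j, hj, hdle⟩ := hcase
      have hjS : j ∉ S := Finset.mem_compl.1 hj
      set dzj : ℤ := ((insert j S)ᶜ.card : ℤ) - r (insert j S)ᶜ with hdzj
      -- lower bound for all positive atoms
      have hlow : ∀ a', atomP p S a' ≠ 0 → (dzj : ℝ) ≤ H2 (condA p S a') := by
        intro a' hpos
        obtain ⟨y', w'⟩ := a'
        rw [peratom y' w' hpos j hj]
        have := H2_bit_nonneg (hbitfacts y' w' hpos j).1 (hbitfacts y' w' hpos j).2
        rw [← hdzj]
        linarith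
      have havg_ge : (dzj : ℝ) ≤ (dzS : ℝ) := by
        rw [← havg]
        exact avg_ge hweights.1 hweights.2 hlow
      have heq : (dzj : ℝ) = (dzS : ℝ) := le_antisymm havg_ge (by exact_mod_cast hdle)
      have hforce := forcing_lo hweights.1 hweights.2
        (fun a' hpos => heq ▸ hlow a' hpos) (heq ▸ havg)
      -- our atom collapses
      have hH2a : H2 (condA p S (y, w)) = (dzS : ℝ) := hforce (y, w) ha
      have hlam0 : H2 (marg (condA p S (y, w)) (fun x => x j)) = 0 := by
        have := peratom y w ha j hj
        rw [hH2a, ← hdzj, ← heq] at this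
        linarith
      rcases H2_bit_eq_zero (hbitfacts y w ha j).2 hlam0 with ⟨hb1, hb0⟩ | ⟨hb1, hb0⟩
      · -- all mass on x j = 0
        have hsupp : ∀ x, condA p S (y, w) x ≠ 0 → x j = 0 := by
          intro x hx
          by_contra hxj
          have hxj1 : x j = 1 := zmod2_ne_zero hxj
          have := fiber_zero_of_marg_zero (condA_nonneg hp S (y, w))
            (f := fun x => x j) (a := 1) hb0 x hxj1
          exact hx this
        have hcoll : condDist (condA p S (y, w)) (fun x => x j) 0 = condA p S (y, w) :=
          condDist_collapse hsupp (sum_condA ha)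
        have hπb : atomP p (insert j S) (y, ext1 hjS w 0) ≠ 0 := by
          intro hz
          have := marg_eval (p := p) hjS y w 0
          rw [hz, zero_div] at this
          rw [this] at hb1
          norm_num at hb1
        obtain ⟨V, hV1, hV2, hV3⟩ := ih (insert j S) (le_of_eq (compl_card j hj))
          (y, ext1 hjS w 0) hπb
        refine ⟨V, ?_, ?_, ?_⟩
        · refine le_trans hV1 (coordSub_mono ?_)
          rw [Finset.compl_insert]
          exact Finset.erase_subset j Sᶜ
        · rw [← condDist_eval hjS 0 ha, hcoll] at hV2
          exact hV2
        · rw [hV3, ← hdzj]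
          exact_mod_cast heq
      · -- all mass on x j = 1
        have hsupp : ∀ x, condA p S (y, w) x ≠ 0 → x j = 1 := by
          intro x hx
          by_contra hxj
          have hxj0 : x j = 0 := by
            rcases zmod2_cases (x j) with h0 | h1
            · exact h0
            · exact absurd h1 hxj
          have := fiber_zero_of_marg_zero (condA_nonneg hp S (y, w))
            (f := fun x => x j) (a := 0) hb0 x hxj0
          exact hx this
        have hcoll : condDist (condA p S (y, w)) (fun x => x j) 1 = condA p S (y, w) :=
          condDist_collapse hsupp (sum_condA ha)
        have hπb : atomP p (insert j S) (y, ext1 hjS w 1) ≠ 0 := by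
          intro hz
          have := marg_eval (p := p) hjS y w 1
          rw [hz, zero_div] at this
          rw [this] at hb1
          norm_num at hb1
        obtain ⟨V, hV1, hV2, hV3⟩ := ih (insert j S) (le_of_eq (compl_card j hj))
          (y, ext1 hjS w 1) hπb
        refine ⟨V, ?_, ?_, ?_⟩
        · refine le_trans hV1 (coordSub_mono ?_)
          rw [Finset.compl_insert]
          exact Finset.erase_subset j Sᶜ
        · rw [← condDist_eval hjS 1 ha, hcoll] at hV2
          exact hV2
        · rw [hV3, ← hdzj]
          exact_mod_cast heq
    · -- Case 2 : all directions balanced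
      push_neg at hcase
      have hup : ∀ a', atomP p S a' ≠ 0 → H2 (condA p S a') ≤ (dzS : ℝ) := by
        intro a' hpos
        obtain ⟨y', w'⟩ := a'
        obtain ⟨j, hj⟩ := hTne
        have hlt := hcase j hj
        have h1le : ((insert j S)ᶜ.card : ℤ) - r (insert j S)ᶜ + 1 ≤ dzS :=
          Int.add_one_le_iff.mpr hlt
        have hb := H2_bit_le_one (hbitfacts y' w' hpos j).2
        rw [peratom y' w' hpos j hj]
        have hcast : (((insert j S)ᶜ.card : ℤ) - r (insert j S)ᶜ : ℝ) + 1 ≤ (dzS : ℝ) := by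
          exact_mod_cast h1le
        push_cast at hcast ⊢
        linarith
      have hforce := forcing_hi hweights.1 hweights.2 hup havg
      have hH2a : H2 (condA p S (y, w)) = (dzS : ℝ) := hforce (y, w) ha
      have hbit1 : ∀ j ∈ Sᶜ,
          marg (condA p S (y, w)) (fun x => x j) 0 = 2⁻¹ ∧
          marg (condA p S (y, w)) (fun x => x j) 1 = 2⁻¹ ∧
          ((insert j S)ᶜ.card : ℤ) - r (insert j S)ᶜ + 1 = dzS := by
        intro j hj
        have hpa := peratom y w ha j hj
        have hble := H2_bit_le_one (hbitfacts y w ha j).2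
        have h1le : ((insert j S)ᶜ.card : ℤ) - r (insert j S)ᶜ + 1 ≤ dzS :=
          Int.add_one_le_iff.mpr (hcase j hj)
        have hcast : (((insert j S)ᶜ.card : ℤ) - r (insert j S)ᶜ : ℝ) + 1 ≤ (dzS : ℝ) := by
          exact_mod_cast h1le
        have hpa' := hpa
        push_cast at hpa' hcast
        have hkey : H2 (marg (condA p S (y, w)) (fun x => x j))
            + (((insert j S)ᶜ.card : ℝ) - ((r (insert j S)ᶜ : ℤ) : ℝ)) = (dzS : ℝ) := by
          rw [← hpa']
          exact hH2a
        have hbeq : H2 (marg (condA p S (y, w)) (fun x => x j)) = 1 := by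
          linarith
        obtain ⟨h0, h1⟩ := H2_bit_eq_one (hbitfacts y w ha j).2 hbeq
        refine ⟨h0, h1, ?_⟩
        have hreal : (((insert j S)ᶜ.card : ℤ) - r (insert j S)ᶜ : ℝ) + 1 = (dzS : ℝ) := by
          push_cast
          linarith
        exact_mod_cast hreal
      obtain ⟨j, hj⟩ := hTne
      have hjS : j ∉ S := Finset.mem_compl.1 hj
      obtain ⟨hlam0, hlam1, hdzj1⟩ := hbit1 j hj
      have hπb : ∀ b : ZMod 2, atomP p (insert j S) (y, ext1 hjS w b) ≠ 0 := by
        intro b hz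
        have hme := marg_eval (p := p) hjS y w b
        rw [hz, zero_div] at hme
        rcases zmod2_cases b with rfl | rfl
        · rw [hme] at hlam0; norm_num at hlam0
        · rw [hme] at hlam1; norm_num at hlam1
      obtain ⟨V0, hV01, hV02, hV03⟩ := ih (insert j S) (le_of_eq (compl_card j hj))
        (y, ext1 hjS w 0) (hπb 0)
      obtain ⟨V1, hV11, hV12, hV13⟩ := ih (insert j S) (le_of_eq (compl_card j hj))
        (y, ext1 hjS w 1) (hπb 1)
      -- profile argument
      have hprof : ∀ R, R ⊆ (insert j S)ᶜ → ∀ (b : ZMod 2)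
          (Vb : Submodule (ZMod 2) (Fin m → ZMod 2)),
          IsUC (condA p (insert j S) (y, ext1 hjS w b)) Vb →
          (finrank (ZMod 2) (Vb ⊓ coordSub m R :
            Submodule (ZMod 2) (Fin m → ZMod 2)) : ℤ) = (R.card : ℤ) - r R := by
        intro R hR b Vb hVb
        have hsub : insert j S ⊆ Rᶜ := Finset.subset_compl_comm.mp hR
        have hsum1 : ∑ w3, marg (condA p (insert j S) (y, ext1 hjS w b)) (restr Rᶜ) w3 = 1 := by
          rw [sum_marg]
          exact sum_condA (hπb b)
        obtain ⟨w3, _, hw3⟩ :=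
          Finset.exists_ne_zero_of_sum_ne_zero (by rw [hsum1]; norm_num :
            ∑ w3, marg (condA p (insert j S) (y, ext1 hjS w b)) (restr Rᶜ) w3 ≠ 0)
        have hcompat := marg_ne_zero_compat hsub hw3
        have hπ3 : atomP p Rᶜ (y, w3) ≠ 0 := by
          intro hz
          rw [marg_restr_compat hsub hcompat, hz, zero_div] at hw3
          exact hw3 rfl
        have hcc : Rᶜᶜ = R := compl_compl R
        have hcardR : Rᶜᶜ.card ≤ n := by
          rw [hcc]
          calc R.card ≤ (insert j S)ᶜ.card := Finset.card_le_card hR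
            _ = n := compl_card j hj
        obtain ⟨V3, hV31, hV32, hV33⟩ := ih Rᶜ hcardR (y, w3) hπ3
        have hident : condDist (condA p (insert j S) (y, ext1 hjS w b)) (restr Rᶜ) w3
            = condA p Rᶜ (y, w3) := condDist_restr hsub (hπb b) hcompat
        have hUC2 : IsUC (condA p Rᶜ (y, w3)) (Vb ⊓ coordSub m R) := by
          have h' := IsUC_condDist hVb hw3
          rw [hident, hcc] at h'
          exact h'
        have hVeq3 := IsUC_unique hUC2 hV32
        rw [hVeq3, hV33, hcc]
      have hcards : ∀ R ⊆ (insert j S)ᶜ,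
          Nat.card (V0 ⊓ coordSub m R : Submodule (ZMod 2) (Fin m → ZMod 2))
            = Nat.card (V1 ⊓ coordSub m R : Submodule (ZMod 2) (Fin m → ZMod 2)) := by
        intro R hR
        have h0 := hprof R hR 0 V0 hV02
        have h1 := hprof R hR 1 V1 hV12
        rw [card_submodule, card_submodule]
        congr 1
        omega
      have hVeq : V0 = V1 := profile_unique hV01 hV11 hcards
      have hVj : ∀ v ∈ V0, v j = 0 := by
        intro v hv
        refine hV01 hv j ?_
        rw [Finset.compl_insert]
        exact Finset.notMem_erase j Sᶜ
      have hc0 : IsUC (condDist (condA p S (y, w)) (fun x => x j) 0) V0 := by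
        rw [condDist_eval hjS 0 ha]
        exact hV02
      have hc1 : IsUC (condDist (condA p S (y, w)) (fun x => x j) 1) V0 := by
        rw [condDist_eval hjS 1 ha, hVeq]
        exact hV12
      obtain ⟨x0, x1, hq0, hq1, hUC, hfr⟩ := IsUC_join hVj hlam0 hlam1 hc0 hc1
      refine ⟨V0 ⊔ Submodule.span (ZMod 2) {x1 - x0}, ?_, hUC, ?_⟩
      · refine sup_le ?_ ?_
        · refine le_trans hV01 (coordSub_mono ?_)
          rw [Finset.compl_insert]
          exact Finset.erase_subset j Sᶜ
        · rw [Submodule.span_le, Set.singleton_subset_iff]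
          intro i hi
          have hiS : i ∈ S := by
            by_contra hiS
            exact hi (Finset.mem_compl.2 hiS)
          have hr0' : restr S x0 = w := (condA_ne_zero hq0).1
          have hr1' : restr S x1 = w := (condA_ne_zero hq1).1
          show x1 i - x0 i = 0
          rw [show x1 i = w ⟨i, hiS⟩ from congrFun hr1' ⟨i, hiS⟩,
            show x0 i = w ⟨i, hiS⟩ from congrFun hr0' ⟨i, hiS⟩, sub_self]
      · have hfrz : (finrank (ZMod 2) (V0 ⊔ Submodule.span (ZMod 2) {x1 - x0} :
            Submodule (ZMod 2) (Fin m → ZMod 2)) : ℤ) = (finrank (ZMod 2) V0 : ℤ) + 1 := by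
          exact_mod_cast congrArg (Nat.cast : ℕ → ℤ) hfr
        rw [hfrz, hV03]
        rw [compl_card j hj] at hdzj1 ⊢
        omega

end S10
end Part9

section Part10
open Real Module Finset
open scoped Classical
namespace S10

variable {m : ℕ}

/-- The subspace attached to a deterministic linear channel. -/
noncomputable def kerJ {k : ℕ} (A : Matrix (Fin k) (Fin m) (ZMod 2)) (J : Finset (Fin m)) :
    Submodule (ZMod 2) (Fin m → ZMod 2) :=
  LinearMap.ker A.mulVecLin ⊓ coordSub m J

lemma backward_marg {k : ℕ} (A : Matrix (Fin k) (Fin m) (ZMod 2)) (J : Finset (Fin m))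
    (y' : Fin k → ZMod 2) (w : {i // i ∈ Jᶜ} → ZMod 2) :
    atomP (inputJoint (fun x y => if y = A.mulVec x then (1:ℝ) else 0)) Jᶜ (y', w) = 0 ∨
    atomP (inputJoint (fun x y => if y = A.mulVec x then (1:ℝ) else 0)) Jᶜ (y', w)
      = (Nat.card (kerJ A J) : ℝ) * ((2:ℝ) ^ m)⁻¹ := by
  set W : (Fin m → ZMod 2) → (Fin k → ZMod 2) → ℝ :=
    fun x y => if y = A.mulVec x then (1:ℝ) else 0 with hW
  have hval : ∀ x : Fin m → ZMod 2,
      (if restr Jᶜ x = w then inputJoint W (x, y') else 0)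
        = (if (restr Jᶜ x = w ∧ y' = A.mulVec x) then ((2:ℝ) ^ m)⁻¹ else 0) := by
    intro x
    by_cases h1 : restr Jᶜ x = w
    · by_cases h2 : y' = A.mulVec x
      · rw [if_pos h1, if_pos ⟨h1, h2⟩]
        show W x y' / 2 ^ m = _
        rw [hW]
        simp only []
        rw [if_pos h2, one_div]
      · rw [if_pos h1, if_neg (fun hc => h2 hc.2)]
        show W x y' / 2 ^ m = 0
        rw [hW]
        simp only []
        rw [if_neg h2, zero_div]
    · rw [if_neg h1, if_neg (fun hc => h1 hc.1)]
  rw [atomP_eq, Finset.sum_congr rfl (fun x _ => hval x), ← Finset.sum_filter,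
    Finset.sum_const, nsmul_eq_mul]
  by_cases hne : (univ.filter fun x : Fin m → ZMod 2 =>
      restr Jᶜ x = w ∧ y' = A.mulVec x).Nonempty
  · right
    obtain ⟨x1, hx1⟩ := hne
    rw [Finset.mem_filter] at hx1
    obtain ⟨_, hx1w, hx1A⟩ := hx1
    congr 1
    have key : ∀ x : Fin m → ZMod 2,
        (restr Jᶜ x = w ∧ y' = A.mulVec x) ↔ x - x1 ∈ kerJ A J := by
      intro x
      constructor
      · rintro ⟨h1, h2⟩
        constructor
        · show A.mulVecLin (x - x1) = 0
          rw [Matrix.mulVecLin_apply, Matrix.mulVec_sub, ← h2, ← hx1A, sub_self]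
        · intro i hi
          have hiJc : i ∈ Jᶜ := Finset.mem_compl.2 hi
          have e1 : x i = w ⟨i, hiJc⟩ := congrFun h1 ⟨i, hiJc⟩
          have e2 : x1 i = w ⟨i, hiJc⟩ := congrFun hx1w ⟨i, hiJc⟩
          show x i - x1 i = 0
          rw [e1, e2, sub_self]
      · rintro ⟨h1, h2⟩
        constructor
        · funext i
          have hiJ : i.1 ∉ J := Finset.mem_compl.1 i.2
          have : x i.1 - x1 i.1 = 0 := h2 i.1 hiJ
          show x i.1 = w i
          have hxi : x i.1 = x1 i.1 := by
            linear_combination (norm := ring_nf) this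
          rw [hxi]
          exact congrFun hx1w i
        · have h1' : A.mulVec (x - x1) = 0 := h1
          have hsub : A.mulVec x - A.mulVec x1 = 0 := by
            rw [← Matrix.mulVec_sub]
            exact h1'
          rw [hx1A]
          exact (sub_eq_zero.1 hsub).symm
    rw [show (univ.filter fun x : Fin m → ZMod 2 => restr Jᶜ x = w ∧ y' = A.mulVec x)
        = (univ.filter fun x : Fin m → ZMod 2 => x - x1 ∈ kerJ A J) from by
      ext x
      simp only [Finset.mem_filter, Finset.mem_univ, true_and]
      exact key x]
    rw [card_coset_filter]
  · left
    rw [Finset.not_nonempty_iff_eq_empty] at hne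
    rw [hne]
    simp

lemma backward_H2p {k : ℕ} (A : Matrix (Fin k) (Fin m) (ZMod 2)) :
    H2 (inputJoint (fun x y => if y = A.mulVec x then (1:ℝ) else 0)) = (m : ℝ) := by
  set W : (Fin m → ZMod 2) → (Fin k → ZMod 2) → ℝ :=
    fun x y => if y = A.mulVec x then (1:ℝ) else 0 with hW
  set u : (Fin m → ZMod 2) → ℝ := fun _ => ((2:ℝ) ^ m)⁻¹ with hu
  set e : (Fin m → ZMod 2) → (Fin m → ZMod 2) × (Fin k → ZMod 2) :=
    fun x => (x, A.mulVec x) with he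
  have hpe : inputJoint W = marg u e := by
    funext ω
    obtain ⟨x, y'⟩ := ω
    have hm : marg u e (x, y') = if A.mulVec x = y' then ((2:ℝ) ^ m)⁻¹ else 0 := by
      unfold marg
      rw [Finset.sum_eq_single x]
      · by_cases h2 : A.mulVec x = y'
        · rw [if_pos (by rw [he]; simp only []; rw [h2]), if_pos h2]
        · rw [if_neg (fun hc => h2 (congrArg Prod.snd hc)), if_neg h2]
      · intro x' _ hx'
        rw [if_neg (fun hc => hx' (congrArg Prod.fst hc))]
      · intro hx
        exact absurd (mem_univ x) hx
    rw [hm]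
    show W x y' / 2 ^ m = _
    rw [hW]
    simp only []
    by_cases h2 : y' = A.mulVec x
    · rw [if_pos h2, if_pos h2.symm, one_div]
    · rw [if_neg h2, if_neg (fun hc => h2 hc.symm), zero_div]
  have heinj : Function.Injective e := fun x x' h => congrArg Prod.fst h
  rw [hpe, H2_marg_inj heinj]
  have h := H2_two_valued (q := u) (c := ((2:ℝ) ^ m)⁻¹) (by positivity)
    (fun x => Or.inr rfl)
    (by
      rw [hu]
      rw [Finset.sum_const, nsmul_eq_mul, Finset.card_univ, card_vec]
      push_cast
      exact mul_inv_cancel₀ (by positivity))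
  rw [h, Real.logb_inv, neg_neg, logb2_pow]

theorem statement10_backward {k : ℕ} (A : Matrix (Fin k) (Fin m) (ZMod 2))
    (J : Finset (Fin m)) :
    condMI (fun x y => if y = A.mulVec x then (1:ℝ) else 0) J = ((colRank A J : ℤ) : ℝ) := by
  set W : (Fin m → ZMod 2) → (Fin k → ZMod 2) → ℝ :=
    fun x y => if y = A.mulVec x then (1:ℝ) else 0 with hW
  have h1 : ∀ x, ∑ y, W x y = 1 := by
    intro x
    rw [hW]
    simp only []
    rw [Finset.sum_ite_eq' univ (A.mulVec x) (fun _ => (1:ℝ)), if_pos (mem_univ _)]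
  rw [condMI_formula h1 J]
  have hH2p : H2 (inputJoint W) = (m : ℝ) := backward_H2p A
  -- entropy of the (Y, X_{Jᶜ}) marginal
  have hKpos := natCard_pos (kerJ A J)
  have hcpos : (0:ℝ) < (Nat.card (kerJ A J) : ℝ) * ((2:ℝ) ^ m)⁻¹ := by positivity
  have hH2g : H2 (marg (inputJoint W) (atomMap Jᶜ))
      = (m : ℝ) - (finrank (ZMod 2) (kerJ A J) : ℝ) := by
    have h := H2_two_valued (q := marg (inputJoint W) (atomMap Jᶜ))
      (c := (Nat.card (kerJ A J) : ℝ) * ((2:ℝ) ^ m)⁻¹) hcpos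
      (fun a => backward_marg A J a.1 a.2)
      (by
        rw [sum_marg]
        exact sum_inputJoint h1)
    rw [h, Real.logb_mul (by positivity) (by positivity), Real.logb_inv, logb2_pow]
    have hN : (Nat.card (kerJ A J) : ℝ) = (2:ℝ) ^ finrank (ZMod 2) (kerJ A J) := by
      rw [card_submodule]
      push_cast
      ring
    rw [hN, logb2_pow]
    ring
  rw [hH2p, hH2g]
  have hcast : ((colRank A J : ℤ) : ℝ)
      = (J.card : ℝ) - (finrank (ZMod 2) (kerJ A J) : ℝ) := by
    unfold kerJ
    rw [colRank_eq A J]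
    push_cast
    ring
  rw [hcast]
  ring

end S10
end Part10

section Part11
open Real Module Finset
open scoped Classical
open S10

theorem statement10 {m : ℕ} (r : Finset (Fin m) → ℤ) :
    (∃ P : BMAC m, ∀ J : Finset (Fin m), condMI P.W J = (r J : ℝ)) ↔
    (∃ (k : ℕ) (A : Matrix (Fin k) (Fin m) (ZMod 2)),
      ∀ J : Finset (Fin m), (colRank A J : ℤ) = r J) := by
  constructor
  · rintro ⟨P, hP⟩
    set p := inputJoint P.W with hpdef
    have hp : ∀ ω, 0 ≤ p ω := inputJoint_nonneg P.nonneg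
    have hsum : ∑ ω, p ω = 1 := sum_inputJoint P.sum_one
    have hG : ∀ S : Finset (Fin m),
        H2 p - H2 (marg p (atomMap S)) = (((Sᶜ.card : ℤ) - r Sᶜ : ℤ) : ℝ) := by
      intro S
      have h := hP Sᶜ
      rw [condMI_formula P.sum_one Sᶜ, compl_compl] at h
      push_cast
      linarith
    have hsum0 : ∑ a, atomP p ∅ a = 1 := by
      rw [sum_atomP]
      exact hsum
    obtain ⟨a0, _, ha0⟩ := Finset.exists_ne_zero_of_sum_ne_zero
      (by rw [hsum0]; norm_num : (∑ a, atomP p ∅ a) ≠ 0)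
    obtain ⟨y0, w0⟩ := a0
    obtain ⟨V, hV1, hV2, hV3⟩ := claimC hp hsum hG ∅ (y0, w0) ha0
    have hdim : ∀ J : Finset (Fin m),
        (finrank (ZMod 2) (V ⊓ coordSub m J :
          Submodule (ZMod 2) (Fin m → ZMod 2)) : ℤ) = (J.card : ℤ) - r J := by
      intro J
      have hsub : (∅ : Finset (Fin m)) ⊆ Jᶜ := Finset.empty_subset _
      have hsum1 : ∑ w3, marg (condA p ∅ (y0, w0)) (restr Jᶜ) w3 = 1 := by
        rw [sum_marg]
        exact sum_condA ha0
      obtain ⟨w3, _, hw3⟩ := Finset.exists_ne_zero_of_sum_ne_zero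
        (by rw [hsum1]; norm_num :
          (∑ w3, marg (condA p ∅ (y0, w0)) (restr Jᶜ) w3) ≠ 0)
      have hcompat := marg_ne_zero_compat hsub hw3
      have hπ3 : atomP p Jᶜ (y0, w3) ≠ 0 := by
        intro hz
        rw [marg_restr_compat hsub hcompat, hz, zero_div] at hw3
        exact hw3 rfl
      obtain ⟨V3, hV31, hV32, hV33⟩ := claimC hp hsum hG Jᶜ (y0, w3) hπ3
      have hident : condDist (condA p ∅ (y0, w0)) (restr Jᶜ) w3 = condA p Jᶜ (y0, w3) :=
        condDist_restr hsub ha0 hcompat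
      have hUC2 : IsUC (condA p Jᶜ (y0, w3)) (V ⊓ coordSub m J) := by
        have h' := IsUC_condDist hV2 hw3
        rw [hident, compl_compl] at h'
        exact h'
      have hVeq := IsUC_unique hUC2 hV32
      rw [hVeq, hV33, compl_compl]
    obtain ⟨Wc, hWc⟩ := Submodule.exists_isCompl V
    set f : (Fin m → ZMod 2) →ₗ[ZMod 2] (Fin m → ZMod 2) :=
      Wc.subtype.comp (Wc.projectionOnto V hWc.symm) with hf
    have hker : LinearMap.ker f = V := by
      rw [hf, LinearMap.ker_comp, Submodule.ker_subtype, Submodule.comap_bot,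
        Submodule.linearProjOfIsCompl_ker]
    refine ⟨m, LinearMap.toMatrix' f, fun J => ?_⟩
    have hmv : (LinearMap.toMatrix' f).mulVecLin = f := by
      rw [← Matrix.toLin'_apply', Matrix.toLin'_toMatrix']
    rw [colRank_eq, hmv, hker, hdim J]
    ring
  · rintro ⟨k, A, hA⟩
    refine ⟨{ Out := Fin k → ZMod 2,
              W := fun x y => if y = A.mulVec x then (1:ℝ) else 0,
              nonneg := ?_, sum_one := ?_ }, ?_⟩
    · intro x y
      show (0:ℝ) ≤ if y = A.mulVec x then 1 else 0
      by_cases h : y = A.mulVec x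
      · rw [if_pos h]
        norm_num
      · rw [if_neg h]
    · intro x
      show (∑ y, if y = A.mulVec x then (1:ℝ) else 0) = 1
      rw [Finset.sum_ite_eq' univ (A.mulVec x) (fun _ => (1:ℝ)), if_pos (mem_univ _)]
    · intro J
      have h := statement10_backward A J
      rw [hA J] at h
      exact h


end Part11
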